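/- arXiv:1712.06503 — 2 statements merged into one kernel-verified Lean document; each statement's English description precedes it below -/
import Mathlib

section
/- Let M be a model of PA and let X be an inductive subset of M. Then X is neutral if and only if for every elementary submodel K of M, the expanded structure (K, X ∩ K) is an elementary substructure of (M, X). -/
open FirstOrder Language

namespace NeutralPA

/-- The function symbols of the language of arithmetic: `0`, `1`, `+`, `·`. -/
inductive ArithFunc : ℕ → Type
  | zero : ArithFunc 0
  | one : ArithFunc 0
  | add : ArithFunc 2
  | mul : ArithFunc 2

/-- The relation symbols of the language of arithmetic: `<`. -/
inductive ArithRel : ℕ → Type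
  | lt : ArithRel 2

/-- The first-order language of arithmetic `{0, 1, +, ·, <}`. -/
@[reducible] def arith : Language := ⟨ArithFunc, ArithRel⟩

/-- The relation symbols of the language with a single unary predicate `X`. -/
inductive XRel : ℕ → Type
  | mem : XRel 1

/-- The language consisting of a single unary predicate symbol `X`. -/
@[reducible] def xLang : Language := ⟨fun _ => Empty, XRel⟩

/-- The language of arithmetic together with a unary predicate symbol `X`. -/
@[reducible] def xArith : Language := arith.sum xLang

section Defs

variable {M : Type*} [arith.Structure M]

/-- Expansion of a model of arithmetic by a unary predicate interpreted as `X`. -/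
def withX (X : Set M) : xArith.Structure M where
  funMap := fun {n} f v => match f with
    | Sum.inl g => Structure.funMap g v
    | Sum.inr g => g.elim
  RelMap := fun {n} r v => match n, r, v with
    | _, Sum.inl r, v => Structure.RelMap r v
    | _, Sum.inr XRel.mem, v => v 0 ∈ X

/-- The definable closure of a single element `a` in an `L`-structure `M`:
the set of all `b` that are the unique solution of some `L`-formula `φ(a, y)`. -/
def dcl (L : Language) {M : Type*} [L.Structure M] (a : M) : Set M :=
  { b | ∃ φ : L.Formula (Fin 2), ∀ y : M, φ.Realize ![a, y] ↔ y = b }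

/-- The definable closure of `a` in the expanded structure `(M, X)`. -/
def dclX (X : Set M) (a : M) : Set M :=
  @dcl xArith M (withX X) a

/-- A subset `X ⊆ M` is neutral if it does not change the definable closure relation. -/
def Neutral (X : Set M) : Prop :=
  ∀ a : M, dcl arith a = dclX X a

/-- A subset of `M` is definable (with parameters) in the `L`-structure `M`. -/
def DefinableP (L : Language) {M : Type*} [L.Structure M] (s : Set M) : Prop :=
  ∃ (n : ℕ) (φ : L.Formula (Fin n ⊕ Fin 1)) (p : Fin n → M),
    ∀ x : M, x ∈ s ↔ φ.Realize (Sum.elim p ![x])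

/-- A subset of `M` is definable without parameters in the `L`-structure `M`. -/
def Definable0 (L : Language) {M : Type*} [L.Structure M] (s : Set M) : Prop :=
  ∃ φ : L.Formula (Fin 1), ∀ x : M, x ∈ s ↔ φ.Realize ![x]

/-- Semantic interpretations of the arithmetic symbols. -/
def m0 : M := @Structure.funMap arith M _ 0 ArithFunc.zero ![]

def m1 : M := @Structure.funMap arith M _ 0 ArithFunc.one ![]

def madd (a b : M) : M := @Structure.funMap arith M _ 2 ArithFunc.add ![a, b]

def mmul (a b : M) : M := @Structure.funMap arith M _ 2 ArithFunc.mul ![a, b]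

def mlt (a b : M) : Prop := @Structure.RelMap arith M _ 2 ArithRel.lt ![a, b]

def mle (a b : M) : Prop := mlt a b ∨ a = b

/-- The standard numerals in a model of arithmetic. -/
def num : ℕ → M
  | 0 => m0
  | n + 1 => madd (num n) m1

/-- `X` is a class of `M`: every initial-segment restriction is definable with parameters. -/
def IsClass (X : Set M) : Prop :=
  ∀ a : M, DefinableP arith { x | x ∈ X ∧ mlt x a }

end Defs

section PA

variable (L : Language)

/-- The term given by a constant symbol. -/
def cT (c : L.Functions 0) {α : Type} : L.Term α := Term.func c ![]

/-- The term given by a binary function symbol. -/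
def b2T (f : L.Functions 2) {α : Type} (t u : L.Term α) : L.Term α := Term.func f ![t, u]

/-- The atomic bounded formula given by a binary relation symbol. -/
def r2F (r : L.Relations 2) {α : Type} {n : ℕ} (t u : L.Term (α ⊕ Fin n)) :
    L.BoundedFormula α n := BoundedFormula.rel r ![t, u]

variable {L}

/-- The `i`-th bound variable, as a term. -/
def bv {n : ℕ} (i : Fin n) : L.Term (Empty ⊕ Fin n) := Term.var (Sum.inr i)

/-- Universal quantification over all the variables indexed by `Fin n`. -/
def iAllsn {α : Type} {n : ℕ} (φ : L.Formula (α ⊕ Fin n)) : L.Formula α :=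
  (BoundedFormula.relabel id φ).alls

variable (L)

/-- The finitely many base axioms of `PA`, for an arbitrary language equipped with
symbols `0`, `1`, `+`, `·`, `<`. -/
def paBase (z o : L.Functions 0) (pl ml : L.Functions 2) (lt : L.Relations 2) : L.Theory :=
  let zt : ∀ {n : ℕ}, L.Term (Empty ⊕ Fin n) := cT L z
  let ot : ∀ {n : ℕ}, L.Term (Empty ⊕ Fin n) := cT L o
  let A1 : L.BoundedFormula Empty 1 := ∼((b2T L pl (bv 0) ot).bdEqual zt)
  let A2 : L.BoundedFormula Empty 2 :=
    ((b2T L pl (bv 0) ot).bdEqual (b2T L pl (bv 1) ot)).imp ((bv 0).bdEqual (bv 1))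
  let A3 : L.BoundedFormula Empty 1 := (b2T L pl (bv 0) zt).bdEqual (bv 0)
  let A4 : L.BoundedFormula Empty 2 :=
    (b2T L pl (bv 0) (b2T L pl (bv 1) ot)).bdEqual (b2T L pl (b2T L pl (bv 0) (bv 1)) ot)
  let A5 : L.BoundedFormula Empty 1 := (b2T L ml (bv 0) zt).bdEqual zt
  let A6 : L.BoundedFormula Empty 2 :=
    (b2T L ml (bv 0) (b2T L pl (bv 1) ot)).bdEqual (b2T L pl (b2T L ml (bv 0) (bv 1)) (bv 0))
  let A7body : L.BoundedFormula Empty 3 :=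
    (b2T L pl (b2T L pl (bv 2) (bv 0)) ot).bdEqual (bv 1)
  let A7 : L.BoundedFormula Empty 2 := (r2F L lt (bv 0) (bv 1)).iff A7body.ex
  {A1.all, A2.all.all, A3.all, A4.all.all, A5.all, A6.all.all, A7.all.all}

/-- The induction axiom for a formula `φ(y₁, …, yₘ, x)`, where `x` (the `Sum.inr`
coordinate) is the induction variable and the `yᵢ` are parameters. -/
def indAx (z o : L.Functions 0) (pl : L.Functions 2) {m : ℕ}
    (φ : L.Formula (Fin m ⊕ Fin 1)) : L.Sentence :=
  let zt : L.Term (Fin m) := cT L z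
  let phi0 : L.Formula (Fin m) := φ.subst (Sum.elim Term.var fun _ => zt)
  let succ : L.Term (Fin m ⊕ Fin 1) :=
    b2T L pl (Term.var (Sum.inr 0)) (cT L o)
  let phiS : L.Formula (Fin m ⊕ Fin 1) :=
    φ.subst (Sum.elim (fun i => Term.var (Sum.inl i)) fun _ => succ)
  let step : L.Formula (Fin m) := iAllsn (φ.imp phiS)
  let concl : L.Formula (Fin m) := iAllsn φ
  iAllsn ((phi0.imp (step.imp concl)).relabel Sum.inr)

/-- Peano Arithmetic in a language equipped with symbols `0`, `1`, `+`, `·`, `<`: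
the base axioms together with the induction scheme for all formulas of the language. -/
def paScheme (z o : L.Functions 0) (pl ml : L.Functions 2) (lt : L.Relations 2) : L.Theory :=
  paBase L z o pl ml lt ∪ ⋃ m : ℕ, Set.range fun φ : L.Formula (Fin m ⊕ Fin 1) => indAx L z o pl φ

end PA

/-- The theory `PA` in the language of arithmetic. -/
def paT : arith.Theory :=
  paScheme arith ArithFunc.zero ArithFunc.one ArithFunc.add ArithFunc.mul ArithRel.lt

/-- The theory `PA*`: Peano arithmetic, with induction for all formulas in the language
of arithmetic expanded by a unary predicate. -/
def paStarT : xArith.Theory :=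
  paScheme xArith (Sum.inl ArithFunc.zero) (Sum.inl ArithFunc.one) (Sum.inl ArithFunc.add)
    (Sum.inl ArithFunc.mul) (Sum.inl ArithRel.lt)

/-- `M`, with a given `L`-structure, is a model of the theory `T`. -/
def ModelOf (L : Language) (M : Type*) [L.Structure M] (T : L.Theory) : Prop :=
  ∀ φ ∈ T, M ⊨ φ

section MDefs

variable {M : Type*} [arith.Structure M]

/-- `X ⊆ M` is inductive: the expansion `(M, X)` satisfies `PA*`. -/
def IndSet (X : Set M) : Prop :=
  @ModelOf xArith M (withX X) paStarT

/-- `M` is a prime model: every element is definable without parameters. -/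
def IsPrimeM (M : Type*) [arith.Structure M] : Prop :=
  ∀ a : M, ∃ φ : arith.Formula (Fin 1), ∀ y : M, φ.Realize ![y] ↔ y = a

/-- The set of elements of `M` definable without parameters (the domain of the
prime elementary submodel, when it exists). -/
def dcl0 (M : Type*) [arith.Structure M] : Set M :=
  { a | ∃ φ : arith.Formula (Fin 1), ∀ y : M, φ.Realize ![y] ↔ y = a }

end MDefs

section Pairs

variable {M : Type*} [arith.Structure M]

/-- For an elementary substructure `K ≼ M` and `X ⊆ M`: the expanded structure
`(K, X ∩ K)` is an elementary substructure of `(M, X)`. -/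
def ElemPairSub (K : arith.ElementarySubstructure M) (X : Set M) : Prop :=
  ∀ (n : ℕ) (φ : xArith.Formula (Fin n)) (v : Fin n → K),
    @Formula.Realize xArith K (withX (Subtype.val ⁻¹' X)) (Fin n) φ v ↔
      @Formula.Realize xArith M (withX X) (Fin n) φ (fun i => (v i : M))

/-- `(M, X) ≼ (N, Y)` along the map `f : M → N`:  `f` is elementary for the language
of arithmetic with an extra unary predicate, interpreted as `X` in `M` and `Y` in `N`. -/
def ElemPairEmb {N : Type*} [arith.Structure N] (f : M → N) (X : Set M) (Y : Set N) : Prop :=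
  ∀ (n : ℕ) (φ : xArith.Formula (Fin n)) (v : Fin n → M),
    @Formula.Realize xArith M (withX X) (Fin n) φ v ↔
      @Formula.Realize xArith N (withX Y) (Fin n) φ (f ∘ v)

/-- An elementary embedding `f : M → N` is cofinal. -/
def Cofinal {N : Type*} [arith.Structure N] (f : M ↪ₑ[arith] N) : Prop :=
  ∀ b : N, ∃ a : M, mle b (f a)

/-- An elementary embedding `f : M → N` is an end extension: every new element lies
above every element of (the image of) `M`. -/
def EndExt {N : Type*} [arith.Structure N] (f : M ↪ₑ[arith] N) : Prop :=
  ∀ b : N, b ∉ Set.range f → ∀ a : M, mlt (f a) b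

/-- An elementary extension `f : M → N` is superminimal: every element of `N ∖ M`
generates all of `N` by definable closure. -/
def Superminimal {N : Type*} [arith.Structure N] (f : M ↪ₑ[arith] N) : Prop :=
  ∀ a : N, a ∉ Set.range f → ∀ b : N, b ∈ dcl arith a

end Pairs

section Coding

variable {M : Type*} [arith.Structure M]

/-- `c` codes the (Cantor) pair `⟨a, b⟩`:  `2c = (a+b)(a+b+1) + 2a`. -/
def IsPair (c a b : M) : Prop :=
  madd c c = madd (mmul (madd a b) (madd (madd a b) m1)) (madd a a)

/-- `r` is the remainder of `a` modulo `m`. -/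
def MMod (a m r : M) : Prop := mlt r m ∧ ∃ q : M, a = madd (mmul q m) r

/-- Gödel's β-function (as a relation): `β(c, i) = r`. -/
def Beta (c i r : M) : Prop :=
  ∃ a b : M, IsPair c a b ∧ MMod a (madd m1 (mmul (madd i m1) b)) r

/-- `s` is a coded sequence of length `l` (i.e. `s = ⟨c, l⟩` for some `c`). -/
def SeqLen (s l : M) : Prop := ∃ c : M, IsPair s c l

/-- `e` is the `i`-th entry of the coded sequence `s`. -/
def Ent (s i e : M) : Prop := ∃ c l : M, IsPair s c l ∧ mlt i l ∧ Beta c i e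

end Coding

section Generic

variable {M : Type*} [arith.Structure M]

/-- `p` is a condition of arithmetic Cohen forcing: a coded finite binary sequence. -/
def IsCond (p : M) : Prop :=
  ∃ c l : M, IsPair p c l ∧ ∀ i : M, mlt i l → (Beta c i m0 ∨ Beta c i m1)

/-- The condition `q` extends the condition `p`. -/
def CondExt (q p : M) : Prop :=
  IsCond q ∧ IsCond p ∧
    ∃ cq lq cp lp : M, IsPair q cq lq ∧ IsPair p cp lp ∧ mle lp lq ∧
      ∀ i : M, mlt i lp → ∀ r : M, Beta cp i r ↔ Beta cq i r

/-- The condition `p` asserts that the bit at position `x` is `1`. -/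
def BitOne (p x : M) : Prop :=
  ∃ c l : M, IsPair p c l ∧ mlt x l ∧ Beta c x m1

/-- `X ⊆ M` is generic: it is the union of a filter of coded finite binary sequences
meeting every dense definable subset of the forcing poset. -/
def GenericSet (X : Set M) : Prop :=
  ∃ G : Set M,
    (∀ p ∈ G, IsCond p) ∧
    (∀ p ∈ G, ∀ q : M, IsCond q → CondExt p q → q ∈ G) ∧
    (∀ p ∈ G, ∀ q ∈ G, ∃ r ∈ G, CondExt r p ∧ CondExt r q) ∧
    (∀ D : Set M, (∀ d ∈ D, IsCond d) → DefinableP arith D →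
      (∀ p : M, IsCond p → ∃ q ∈ D, CondExt q p) → ∃ q ∈ G, q ∈ D) ∧
    X = { x | ∃ p ∈ G, BitOne p x }

end Generic

section Encodings

/-- An explicit encoding of the arithmetic function symbols. -/
def arithFuncCode : (Σ n, ArithFunc n) → Fin 4
  | ⟨_, ArithFunc.zero⟩ => 0
  | ⟨_, ArithFunc.one⟩ => 1
  | ⟨_, ArithFunc.add⟩ => 2
  | ⟨_, ArithFunc.mul⟩ => 3

def arithFuncDecode : Fin 4 → Σ n, ArithFunc n :=
  ![⟨0, ArithFunc.zero⟩, ⟨0, ArithFunc.one⟩, ⟨2, ArithFunc.add⟩, ⟨2, ArithFunc.mul⟩]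

instance : Encodable (Σ n, ArithFunc n) :=
  Encodable.ofLeftInverse arithFuncCode arithFuncDecode (by rintro ⟨_, f⟩ <;> cases f <;> rfl)

instance : Encodable (Σ n, ArithRel n) :=
  Encodable.ofLeftInverse (fun _ => (0 : Fin 1)) (fun _ => ⟨2, ArithRel.lt⟩)
    (by rintro ⟨_, r⟩; cases r; rfl)

instance instEncArithFunc : Encodable (Σ n, arith.Functions n) :=
  (inferInstance : Encodable (Σ n, ArithFunc n))

instance instEncSigmaBF {α : Type} [Encodable α] :
    Encodable (Σ n, arith.BoundedFormula α n) :=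
  Encodable.ofLeftInjection (fun φ => φ.2.listEncode)
    (fun l => (BoundedFormula.listDecode l)[0]?)
    fun φ => BoundedFormula.encoding.decode_encode φ

instance instEncFormula {α : Type} [Encodable α] : Encodable (arith.Formula α) :=
  Encodable.ofLeftInjection (fun φ => (⟨0, φ⟩ : Σ n, arith.BoundedFormula α n))
    (fun ψ => match ψ with
      | ⟨0, ψ⟩ => some ψ
      | _ => none)
    fun _ => rfl

/-- A set of formulas is recursive when its set of codes is computable. -/
def IsRecursive {α : Type} [Encodable α] (p : Set α) : Prop :=
  ComputablePred fun k : ℕ => ∃ x ∈ p, Encodable.encode x = k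

end Encodings

section RecSat

variable (M : Type*) [arith.Structure M]

/-- The formula `x < y` where `x` is the `Sum.inr` variable and `y` is the `i`-th
`Sum.inl` variable; used to express that a type contains a formula `x < b`. -/
def ltParamFml {n : ℕ} (i : Fin n) : arith.Formula (Fin n ⊕ Fin 1) :=
  Relations.formula (ArithRel.lt : arith.Relations 2)
    ![Term.var (Sum.inr 0), Term.var (Sum.inl i)]

/-- `M` is recursively saturated: every recursive type over finitely many parameters
of `M`, in one free variable, that is finitely realized in `M` is realized in `M`. -/
def RecSat : Prop :=
  ∀ (n : ℕ) (p : Set (arith.Formula (Fin n ⊕ Fin 1))) (v : Fin n → M),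
    IsRecursive p →
    (∀ fs : Finset (arith.Formula (Fin n ⊕ Fin 1)), ↑fs ⊆ p →
      ∃ a : M, ∀ φ ∈ fs, Formula.Realize φ (Sum.elim v ![a])) →
    ∃ a : M, ∀ φ ∈ p, Formula.Realize φ (Sum.elim v ![a])

/-- `M` is short recursively saturated: every recursive type over finitely many
parameters of `M` that contains a formula `x < b` for some parameter `b` and is
finitely realized in `M` is realized in `M`. -/
def ShortRecSat : Prop :=
  ∀ (n : ℕ) (p : Set (arith.Formula (Fin n ⊕ Fin 1))) (v : Fin n → M),
    IsRecursive p →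
    (∃ i : Fin n, ltParamFml i ∈ p) →
    (∀ fs : Finset (arith.Formula (Fin n ⊕ Fin 1)), ↑fs ⊆ p →
      ∃ a : M, ∀ φ ∈ fs, Formula.Realize φ (Sum.elim v ![a])) →
    ∃ a : M, ∀ φ ∈ p, Formula.Realize φ (Sum.elim v ![a])

end RecSat

section SatClass

variable {M : Type*} [arith.Structure M]

/-- `e` codes the tagged node `⟨t, a, b⟩` (a node of a syntax tree). -/
def Node (e t a b : M) : Prop := ∃ d : M, IsPair e t d ∧ IsPair d a b

/-- Internal syntax of terms (tags: `0` = variable, `1` = the constant `0`,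
`2` = the constant `1`, `3` = addition, `4` = multiplication):
admissibility of an entry of a construction sequence. -/
def TermEnt (s i e : M) : Prop :=
  (∃ k : M, Node e (num 0) k m0) ∨ Node e (num 1) m0 m0 ∨ Node e (num 2) m0 m0 ∨
    (∃ a b j j' : M, mlt j i ∧ mlt j' i ∧ Ent s j a ∧ Ent s j' b ∧
      (Node e (num 3) a b ∨ Node e (num 4) a b))

/-- `t` is a term in the sense of `M`. -/
def IsTerm (t : M) : Prop :=
  ∃ s : M, (∃ i : M, Ent s i t) ∧ ∀ i e : M, Ent s i e → TermEnt s i e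

/-- The valuation `v` (a coded sequence) assigns the value `r` to the variable `k`. -/
def ValAt (v k r : M) : Prop := Ent v k r

/-- Admissibility of an entry of a term-evaluation sequence: entries are pairs
`⟨term, value⟩`, evaluated under the valuation `v`. -/
def TValEnt (v s i e : M) : Prop :=
  ∃ te re : M, IsPair e te re ∧
    ((∃ k : M, Node te (num 0) k m0 ∧ ValAt v k re) ∨
      (Node te (num 1) m0 m0 ∧ re = m0) ∨
      (Node te (num 2) m0 m0 ∧ re = m1) ∨
      (∃ a b ra rb j j' pa pb : M, mlt j i ∧ mlt j' i ∧ Ent s j pa ∧ Ent s j' pb ∧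
        IsPair pa a ra ∧ IsPair pb b rb ∧
        ((Node te (num 3) a b ∧ re = madd ra rb) ∨ (Node te (num 4) a b ∧ re = mmul ra rb))))

/-- The term (code) `t` has value `r` under the valuation `v`. -/
def TermVal (v t r : M) : Prop :=
  ∃ s : M, (∃ i e : M, Ent s i e ∧ IsPair e t r) ∧ ∀ i e : M, Ent s i e → TValEnt v s i e

/-- Internal syntax of formulas (tags: `5` = `⊥`, `6` = `=`, `7` = `<`, `8` = `→`,
`9` = universal quantification binding the named variable in the first component):
admissibility of an entry of a construction sequence. -/
def FmlaEnt (s i e : M) : Prop :=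
  Node e (num 5) m0 m0 ∨
    (∃ t u : M, (Node e (num 6) t u ∨ Node e (num 7) t u) ∧ IsTerm t ∧ IsTerm u) ∨
    (∃ a b j j' : M, mlt j i ∧ mlt j' i ∧ Ent s j a ∧ Ent s j' b ∧ Node e (num 8) a b) ∨
    (∃ k a j : M, mlt j i ∧ Ent s j a ∧ Node e (num 9) k a)

/-- `f` is a formula in the sense of `M`. -/
def IsFmla (f : M) : Prop :=
  ∃ s : M, (∃ i : M, Ent s i f) ∧ ∀ i e : M, Ent s i e → FmlaEnt s i e

/-- `v'` is the valuation `v` modified so that variable `k` takes the value `a`. -/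
def VMod (v k a v' : M) : Prop :=
  ValAt v' k a ∧ ∀ m r : M, m ≠ k → (ValAt v m r ↔ ValAt v' m r)

/-- The code (relative to a map `nm` giving the name of each variable) of a term
of the language of arithmetic. -/
def GTerm {β : Type*} (nm : β → M) : arith.Term β → M → Prop
  | Term.var b, e => Node e (num 0) (nm b) m0
  | Term.func f ts, e =>
    match f, ts with
    | ArithFunc.zero, _ => Node e (num 1) m0 m0
    | ArithFunc.one, _ => Node e (num 2) m0 m0
    | ArithFunc.add, ts => ∃ a b : M, GTerm nm (ts 0) a ∧ GTerm nm (ts 1) b ∧ Node e (num 3) a b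
    | ArithFunc.mul, ts => ∃ a b : M, GTerm nm (ts 0) a ∧ GTerm nm (ts 1) b ∧ Node e (num 4) a b

/-- The code of a formula of arithmetic with free variables among `Fin k`
(free variable `i` is named `i`; the variable bound at quantifier depth `j` is
named `k + j`). -/
def GFmla {k : ℕ} : ∀ {n : ℕ}, arith.BoundedFormula (Fin k) n → M → Prop
  | n, BoundedFormula.falsum, e => Node e (num 5) m0 m0
  | n, BoundedFormula.equal t u, e =>
    ∃ a b : M, GTerm (Sum.elim (fun i : Fin k => num i) fun j : Fin n => num (k + j)) t a ∧
      GTerm (Sum.elim (fun i : Fin k => num i) fun j : Fin n => num (k + j)) u b ∧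
      Node e (num 6) a b
  | n, BoundedFormula.rel R ts, e =>
    match R, ts with
    | ArithRel.lt, ts =>
      ∃ a b : M, GTerm (Sum.elim (fun i : Fin k => num i) fun j : Fin n => num (k + j)) (ts 0) a ∧
        GTerm (Sum.elim (fun i : Fin k => num i) fun j : Fin n => num (k + j)) (ts 1) b ∧
        Node e (num 7) a b
  | _, BoundedFormula.imp f g, e => ∃ a b : M, GFmla f a ∧ GFmla g b ∧ Node e (num 8) a b
  | n, BoundedFormula.all f, e => ∃ a : M, GFmla f a ∧ Node e (num 9) (num (k + n)) a

/-- `S` is a full satisfaction class for `M`:  `S` is a set of (codes of) pairs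
`⟨φ, v⟩` of `M`-formulas and `M`-valuations satisfying Tarski's compositional
conditions for all formulas in the sense of `M` — including nonstandard ones — and
agreeing with actual satisfaction on standard formulas. -/
def FullSatClass (S : Set M) : Prop :=
  (∀ x ∈ S, ∃ f v : M, IsPair x f v ∧ IsFmla f) ∧
    (∀ e t u v x : M, Node e (num 6) t u → IsTerm t → IsTerm u → IsPair x e v →
      (x ∈ S ↔ ∃ r : M, TermVal v t r ∧ TermVal v u r)) ∧
    (∀ e t u v x : M, Node e (num 7) t u → IsTerm t → IsTerm u → IsPair x e v →
      (x ∈ S ↔ ∃ r r' : M, TermVal v t r ∧ TermVal v u r' ∧ mlt r r')) ∧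
    (∀ e v x : M, Node e (num 5) m0 m0 → IsPair x e v → x ∉ S) ∧
    (∀ e f g v x xf xg : M, Node e (num 8) f g → IsFmla f → IsFmla g →
      IsPair x e v → IsPair xf f v → IsPair xg g v →
      (x ∈ S ↔ (xf ∈ S → xg ∈ S))) ∧
    (∀ e k f v x : M, Node e (num 9) k f → IsFmla f → IsPair x e v →
      (x ∈ S ↔ ∀ a v' x' : M, VMod v k a v' → IsPair x' f v' → x' ∈ S)) ∧
    (∀ (k : ℕ) (φ : arith.Formula (Fin k)) (w : Fin k → M) (e v x : M),
      GFmla φ e → (∀ i : Fin k, ValAt v (num i) (w i)) → IsPair x e v →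
      (x ∈ S ↔ φ.Realize w))

end SatClass


/-- `X` is `A`-neutral: for all `a, b ∈ A`, `a ∈ dcl(b)` iff `a ∈ dcl^{(M,X)}(b)`. -/
def ANeutral {M : Type*} [arith.Structure M] (A X : Set M) : Prop :=
  ∀ a ∈ A, ∀ b ∈ A, (a ∈ dcl arith b ↔ a ∈ dclX X b)

section Dev

open FirstOrder Language BoundedFormula

variable {L : Language} {M : Type*} [L.Structure M]

lemma fin0_eq (g : Fin 0 → M) : g = ![] := funext (fun i => i.elim0)

lemma fin1_eq (g : Fin 1 → M) : g = ![g 0] := by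
  funext i; fin_cases i; rfl

lemma fin2_eq (g : Fin 2 → M) : g = ![g 0, g 1] := by
  funext i; fin_cases i <;> rfl

@[simp] lemma realize_cT (c : L.Functions 0) {α : Type} (v : α → M) :
    (cT L c).realize v = Structure.funMap c ![] := by
  simp only [cT, Term.realize]
  congr 1
  exact fin0_eq _

@[simp] lemma realize_b2T (f : L.Functions 2) {α : Type} (t u : L.Term α) (v : α → M) :
    (b2T L f t u).realize v = Structure.funMap f ![t.realize v, u.realize v] := by
  simp only [b2T, Term.realize]
  congr 1
  funext i; fin_cases i <;> rfl

@[simp] lemma realize_r2F (r : L.Relations 2) {α : Type} {n : ℕ}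
    (t u : L.Term (α ⊕ Fin n)) (v : α → M) (xs : Fin n → M) :
    (r2F L r t u).Realize v xs ↔
      Structure.RelMap r ![t.realize (Sum.elim v xs), u.realize (Sum.elim v xs)] := by
  have base : (r2F L r t u).Realize v xs ↔
      Structure.RelMap r (fun i => Term.realize (Sum.elim v xs) (![t, u] i)) := Iff.rfl
  rw [base]
  have : (fun i => Term.realize (Sum.elim v xs) (![t, u] i)) =
      ![t.realize (Sum.elim v xs), u.realize (Sum.elim v xs)] := by
    funext i; fin_cases i <;> rfl
  rw [this]

@[simp] lemma realize_bv {n : ℕ} (i : Fin n) (v : Empty ⊕ Fin n → M) :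
    (bv i : L.Term (Empty ⊕ Fin n)).realize v = v (Sum.inr i) := rfl

lemma realize_iAllsn {α : Type} {n : ℕ} (φ : L.Formula (α ⊕ Fin n)) (v : α → M) :
    (iAllsn φ).Realize v ↔ ∀ w : Fin n → M, φ.Realize (Sum.elim v w) := by
  have key : ∀ (u1 u2 : (α ⊕ Fin n) → M) (y1 : Fin 0 → M) (y2 : Fin 0 → M), u1 = u2 →
      (BoundedFormula.Realize φ u1 y1 ↔ BoundedFormula.Realize φ u2 y2) := by
    rintro u1 u2 y1 y2 rfl
    rw [Subsingleton.elim y1 y2]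
  show (BoundedFormula.relabel id φ).alls.Realize v ↔ _
  rw [BoundedFormula.realize_alls]
  simp only [BoundedFormula.realize_relabel]
  constructor
  · intro h w
    refine (key _ _ _ _ ?_).mp (h w)
    funext i
    cases i with
    | inl a => rfl
    | inr b => simp [Fin.castAdd, Fin.castLE, Fin.eta]
  · intro h xs
    refine (key _ _ _ _ ?_).mp (h (xs ∘ Fin.castAdd 0))
    funext i
    cases i with
    | inl a => rfl
    | inr b => rfl

end Dev

section Dev2

open FirstOrder Language

/-- Packaging of the arithmetic symbols of a language. -/
class PASym (L : Language) where
  z : L.Functions 0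
  o : L.Functions 0
  pl : L.Functions 2
  ml : L.Functions 2
  lt : L.Relations 2

instance : PASym arith := ⟨.zero, .one, .add, .mul, .lt⟩

instance : PASym xArith :=
  ⟨Sum.inl .zero, Sum.inl .one, Sum.inl .add, Sum.inl .mul, Sum.inl .lt⟩

section Sem

variable (L : Language) [PASym L] {M : Type*} [L.Structure M]

def e0 : M := Structure.funMap (PASym.z (L := L)) ![]
def e1 : M := Structure.funMap (PASym.o (L := L)) ![]
def eadd (a b : M) : M := Structure.funMap (PASym.pl (L := L)) ![a, b]
def emul (a b : M) : M := Structure.funMap (PASym.ml (L := L)) ![a, b]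
def elt (a b : M) : Prop := Structure.RelMap (PASym.lt (L := L)) ![a, b]
def ele (a b : M) : Prop := elt L a b ∨ a = b

/-- `M` is a model of the `paScheme` of `L`. -/
def PAmod (M : Type*) [L.Structure M] : Prop :=
  ModelOf L M (paScheme L PASym.z PASym.o PASym.pl PASym.ml PASym.lt)

variable {L}

variable (h : PAmod L M)
include h

lemma ax1 (x : M) : eadd L x (e1 L) ≠ e0 L := by
  have hr := h ((∼((b2T L (PASym.pl) (bv 0) (cT L (PASym.o))).bdEqual (cT L (PASym.z)))).all)
    (by
      apply Set.mem_union_left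
      unfold paBase
      exact Set.mem_insert _ _)
  simp only [Sentence.Realize, BoundedFormula.realize_all, BoundedFormula.realize_not,
    BoundedFormula.realize_bdEqual, realize_b2T, realize_cT, realize_bv] at hr
  have := hr x
  simpa [eadd, e1, e0, Fin.snoc] using this

end Sem


section Axs
variable {L : Language} [PASym L] {M : Type*} [L.Structure M] (h : PAmod L M)
include h

local notation "zT" => cT L (PASym.z)
local notation "oT" => cT L (PASym.o)
local notation "pT" => b2T L (PASym.pl)
local notation "mT" => b2T L (PASym.ml)

lemma ax2 {x y : M} (hxy : eadd L x (e1 L) = eadd L y (e1 L)) : x = y := by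
  have hr := h ((((pT (bv 0) oT).bdEqual (pT (bv 1) oT)).imp
      ((bv 0).bdEqual (bv 1))).all.all)
    (by
      apply Set.mem_union_left
      unfold paBase
      exact Set.mem_insert_of_mem _ (Set.mem_insert _ _))
  simp only [Sentence.Realize, BoundedFormula.realize_all, BoundedFormula.realize_imp,
    BoundedFormula.realize_bdEqual, realize_b2T, realize_cT, realize_bv] at hr
  have := hr x y
  simp only [Fin.snoc, eadd, e1] at this hxy ⊢
  simpa [Fin.snoc] using this (by simpa [Fin.snoc, realize_b2T, realize_cT, realize_bv] using hxy)

lemma ax3 (x : M) : eadd L x (e0 L) = x := by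
  have hr := h (((pT (bv 0) zT).bdEqual (bv 0)).all)
    (by
      apply Set.mem_union_left
      unfold paBase
      exact Set.mem_insert_of_mem _ (Set.mem_insert_of_mem _ (Set.mem_insert _ _)))
  simp only [Sentence.Realize, BoundedFormula.realize_all,
    BoundedFormula.realize_bdEqual, realize_b2T, realize_cT, realize_bv] at hr
  have := hr x
  simpa [eadd, e0, Fin.snoc] using this

lemma ax4 (x y : M) : eadd L x (eadd L y (e1 L)) = eadd L (eadd L x y) (e1 L) := by
  have hr := h (((pT (bv 0) (pT (bv 1) oT)).bdEqual (pT (pT (bv 0) (bv 1)) oT)).all.all)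
    (by
      apply Set.mem_union_left
      unfold paBase
      exact Set.mem_insert_of_mem _ (Set.mem_insert_of_mem _ (Set.mem_insert_of_mem _
        (Set.mem_insert _ _))))
  simp only [Sentence.Realize, BoundedFormula.realize_all,
    BoundedFormula.realize_bdEqual, realize_b2T, realize_cT, realize_bv] at hr
  have := hr x y
  simpa [eadd, e1, Fin.snoc] using this

lemma ax5 (x : M) : emul L x (e0 L) = e0 L := by
  have hr := h (((mT (bv 0) zT).bdEqual zT).all)
    (by
      apply Set.mem_union_left
      unfold paBase
      exact Set.mem_insert_of_mem _ (Set.mem_insert_of_mem _ (Set.mem_insert_of_mem _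
        (Set.mem_insert_of_mem _ (Set.mem_insert _ _)))))
  simp only [Sentence.Realize, BoundedFormula.realize_all,
    BoundedFormula.realize_bdEqual, realize_b2T, realize_cT, realize_bv] at hr
  have := hr x
  simpa [emul, e0, Fin.snoc] using this

lemma ax6 (x y : M) : emul L x (eadd L y (e1 L)) = eadd L (emul L x y) x := by
  have hr := h (((mT (bv 0) (pT (bv 1) oT)).bdEqual (pT (mT (bv 0) (bv 1)) (bv 0))).all.all)
    (by
      apply Set.mem_union_left
      unfold paBase
      exact Set.mem_insert_of_mem _ (Set.mem_insert_of_mem _ (Set.mem_insert_of_mem _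
        (Set.mem_insert_of_mem _ (Set.mem_insert_of_mem _ (Set.mem_insert _ _))))))
  simp only [Sentence.Realize, BoundedFormula.realize_all,
    BoundedFormula.realize_bdEqual, realize_b2T, realize_cT, realize_bv] at hr
  have := hr x y
  simpa [emul, eadd, e1, Fin.snoc] using this

lemma ax7 (x y : M) : elt L x y ↔ ∃ w : M, eadd L (eadd L w x) (e1 L) = y := by
  have hr := h (((r2F L (PASym.lt) (bv 0) (bv 1)).iff
      (((pT (pT (bv 2) (bv 0)) oT).bdEqual (bv 1)).ex)).all.all)
    (by
      apply Set.mem_union_left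
      unfold paBase
      exact Set.mem_insert_of_mem _ (Set.mem_insert_of_mem _ (Set.mem_insert_of_mem _
        (Set.mem_insert_of_mem _ (Set.mem_insert_of_mem _ (Set.mem_insert_of_mem _
          (Set.mem_singleton _)))))))
  simp only [Sentence.Realize, BoundedFormula.realize_all, BoundedFormula.realize_iff,
    BoundedFormula.realize_ex, BoundedFormula.realize_bdEqual, realize_r2F,
    realize_b2T, realize_cT, realize_bv] at hr
  have := hr x y
  simp only [Fin.snoc, eadd, e1, elt] at this ⊢
  convert this using 2 <;> simp [Fin.snoc]

end Axs

end Dev2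

section Dev3

open FirstOrder Language

variable {L : Language} [PASym L] {M : Type*} [L.Structure M]

lemma formula_realize_subst {α β : Type} (φ : L.Formula α) (tf : α → L.Term β) (v : β → M) :
    Formula.Realize (φ.subst tf) v ↔ φ.Realize (fun i => (tf i).realize v) := by
  exact BoundedFormula.realize_subst

lemma realize_congr {α : Type} (φ : L.Formula α) {v v' : α → M} (hv : v = v') :
    φ.Realize v ↔ φ.Realize v' := by rw [hv]

lemma ind_principle (h : PAmod L M) {m : ℕ} (φ : L.Formula (Fin m ⊕ Fin 1)) (w : Fin m → M)
    (h0 : φ.Realize (Sum.elim w ![e0 L]))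
    (hs : ∀ x : M, φ.Realize (Sum.elim w ![x]) → φ.Realize (Sum.elim w ![eadd L x (e1 L)])) :
    ∀ x : M, φ.Realize (Sum.elim w ![x]) := by
  have hr := h (indAx L PASym.z PASym.o PASym.pl φ)
    (Set.mem_union_right _ (Set.mem_iUnion.mpr ⟨m, Set.mem_range_self φ⟩))
  have hr' := (realize_iAllsn _ (default : Empty → M)).mp hr w
  rw [Formula.realize_relabel] at hr'
  have helim : (Sum.elim (default : Empty → M) w) ∘ Sum.inr = w := by
    funext i; rfl
  rw [helim] at hr'
  rw [Formula.realize_imp, Formula.realize_imp] at hr'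
  -- translate the three components
  have hphi0 : (Formula.Realize (φ.subst (Sum.elim Term.var fun _ => cT L PASym.z)) w) ↔
      φ.Realize (Sum.elim w ![e0 L]) := by
    rw [formula_realize_subst]
    apply realize_congr
    funext i
    cases i with
    | inl a => rfl
    | inr b =>
      simp only [Sum.elim_inr, realize_cT]
      have : b = 0 := Subsingleton.elim _ _
      rw [this]; rfl
  have hstep : ((iAllsn (φ.imp
        (φ.subst (Sum.elim (fun i => Term.var (Sum.inl i)) fun _ =>
          b2T L PASym.pl (Term.var (Sum.inr 0)) (cT L PASym.o))))).Realize w) ↔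
      ∀ x : M, φ.Realize (Sum.elim w ![x]) → φ.Realize (Sum.elim w ![eadd L x (e1 L)]) := by
    rw [realize_iAllsn]
    constructor
    · intro hh x
      have := hh ![x]
      rw [Formula.realize_imp, formula_realize_subst] at this
      intro h1
      refine (realize_congr φ ?_).mp (this h1)
      funext i
      cases i with
      | inl a => rfl
      | inr b =>
        have : b = 0 := Subsingleton.elim _ _
        subst this
        simp only [Sum.elim_inr, realize_b2T, realize_cT]
        rfl
    · intro hh u
      rw [Formula.realize_imp, formula_realize_subst]
      intro h1
      have h1' : φ.Realize (Sum.elim w ![u 0]) := by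
        refine (realize_congr φ ?_).mp h1
        funext i
        cases i with
        | inl a => rfl
        | inr b =>
          have : b = 0 := Subsingleton.elim _ _
          subst this; rfl
      have := hh (u 0) h1'
      refine (realize_congr φ ?_).mp this
      funext i
      cases i with
      | inl a => rfl
      | inr b =>
        have : b = 0 := Subsingleton.elim _ _
        subst this
        simp only [Sum.elim_inr, realize_b2T, realize_cT]
        rfl
  have hconcl : ((iAllsn φ).Realize w) ↔ ∀ x : M, φ.Realize (Sum.elim w ![x]) := by
    rw [realize_iAllsn]
    constructor
    · intro hh x
      have := hh ![x]
      exact this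
    · intro hh u
      have := hh (u 0)
      refine (realize_congr φ ?_).mp this
      funext i
      cases i with
      | inl a => rfl
      | inr b =>
        have : b = 0 := Subsingleton.elim _ _
        subst this; rfl
  rw [hphi0, hstep, hconcl] at hr'
  exact hr' h0 hs

end Dev3

section Dev4

open FirstOrder Language

variable {L : Language} {M : Type*} [L.Structure M]

/-- A predicate on valuations is definable without parameters. -/
def Df (L : Language) {M : Type*} [L.Structure M] {α : Type} (P : (α → M) → Prop) : Prop :=
  ∃ φ : L.Formula α, ∀ v : α → M, P v ↔ φ.Realize v

namespace Df

variable {α β : Type} {P Q : (α → M) → Prop}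

lemma congr (h : Df L P) (hPQ : ∀ v, P v ↔ Q v) : Df L Q := by
  obtain ⟨φ, hφ⟩ := h
  exact ⟨φ, fun v => (hPQ v).symm.trans (hφ v)⟩

lemma of_formula (φ : L.Formula α) : Df L (fun v : α → M => φ.Realize v) := ⟨φ, fun _ => Iff.rfl⟩

lemma eq (t u : L.Term α) : Df L (fun v : α → M => t.realize v = u.realize v) :=
  ⟨t.equal u, fun v => by rw [Formula.realize_equal]⟩

lemma rel₁ (r : L.Relations 1) (t : L.Term α) :
    Df L (fun v : α → M => Structure.RelMap r ![t.realize v]) :=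
  ⟨r.formula₁ t, fun v => by rw [Formula.realize_rel₁]⟩

lemma rel₂ (r : L.Relations 2) (t u : L.Term α) :
    Df L (fun v : α → M => Structure.RelMap r ![t.realize v, u.realize v]) :=
  ⟨r.formula₂ t u, fun v => by rw [Formula.realize_rel₂]⟩

lemma true' : Df L (fun _ : α → M => True) := ⟨⊤, fun v => by rw [Formula.realize_top]⟩

lemma false' : Df L (fun _ : α → M => False) := ⟨⊥, fun v => by rw [Formula.realize_bot]⟩

lemma not (h : Df L P) : Df L (fun v => ¬ P v) := by
  obtain ⟨φ, hφ⟩ := h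
  exact ⟨φ.not, fun v => by rw [Formula.realize_not]; exact not_congr (hφ v)⟩

lemma and (h1 : Df L P) (h2 : Df L Q) : Df L (fun v => P v ∧ Q v) := by
  obtain ⟨φ, hφ⟩ := h1; obtain ⟨ψ, hψ⟩ := h2
  exact ⟨φ ⊓ ψ, fun v => by rw [Formula.realize_inf]; exact and_congr (hφ v) (hψ v)⟩

lemma or (h1 : Df L P) (h2 : Df L Q) : Df L (fun v => P v ∨ Q v) := by
  obtain ⟨φ, hφ⟩ := h1; obtain ⟨ψ, hψ⟩ := h2
  exact ⟨φ ⊔ ψ, fun v => by rw [Formula.realize_sup]; exact or_congr (hφ v) (hψ v)⟩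

lemma imp (h1 : Df L P) (h2 : Df L Q) : Df L (fun v => P v → Q v) := by
  obtain ⟨φ, hφ⟩ := h1; obtain ⟨ψ, hψ⟩ := h2
  exact ⟨φ.imp ψ, fun v => by rw [Formula.realize_imp]; exact imp_congr (hφ v) (hψ v)⟩

lemma iff (h1 : Df L P) (h2 : Df L Q) : Df L (fun v => P v ↔ Q v) := by
  obtain ⟨φ, hφ⟩ := h1; obtain ⟨ψ, hψ⟩ := h2
  exact ⟨φ.iff ψ, fun v => by rw [Formula.realize_iff]; exact iff_congr (hφ v) (hψ v)⟩

lemma relabel {P : (α → M) → Prop} (h : Df L P) (g : α → β) :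
    Df L (fun v : β → M => P (v ∘ g)) := by
  obtain ⟨φ, hφ⟩ := h
  exact ⟨φ.relabel g, fun v => by rw [Formula.realize_relabel]; exact hφ _⟩

lemma all {γ : Type} [Finite γ] {P : (α ⊕ γ → M) → Prop} (h : Df L P) :
    Df L (fun v : α → M => ∀ u : γ → M, P (Sum.elim v u)) := by
  obtain ⟨φ, hφ⟩ := h
  refine ⟨φ.iAlls γ, fun v => ?_⟩
  rw [Formula.realize_iAlls]
  exact forall_congr' fun u => hφ (Sum.elim v u)

lemma ex {γ : Type} [Finite γ] {P : (α ⊕ γ → M) → Prop} (h : Df L P) :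
    Df L (fun v : α → M => ∃ u : γ → M, P (Sum.elim v u)) := by
  obtain ⟨φ, hφ⟩ := h
  refine ⟨φ.iExs γ, fun v => ?_⟩
  rw [Formula.realize_iExs]
  exact exists_congr fun u => hφ (Sum.elim v u)

lemma finConj {k : ℕ} (P : Fin k → ((α → M) → Prop)) (h : ∀ i, Df L (P i)) :
    Df L (fun v : α → M => ∀ i, P i v) := by
  induction k with
  | zero => exact true'.congr (fun v => by simp [IsEmpty.forall_iff])
  | succ k ih =>
    have := (ih (fun i => P i.castSucc) (fun i => h i.castSucc)).and (h (Fin.last k))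
    refine this.congr (fun v => ?_)
    constructor
    · rintro ⟨h1, h2⟩ i
      refine Fin.lastCases ?_ ?_ i
      · exact h2
      · exact fun j => h1 j
    · intro hh
      exact ⟨fun i => hh _, hh _⟩

end Df

end Dev4

section Dev5

open FirstOrder Language

section Terms

variable (L : Language) [PASym L] {α : Type}

def tZ : L.Term α := cT L PASym.z
def tO : L.Term α := cT L PASym.o
def tP (t u : L.Term α) : L.Term α := b2T L PASym.pl t u
def tM (t u : L.Term α) : L.Term α := b2T L PASym.ml t u

variable {M : Type*} [L.Structure M]

@[simp] lemma realize_tZ (v : α → M) : (tZ L).realize v = e0 L := by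
  simp [tZ, e0]
@[simp] lemma realize_tO (v : α → M) : (tO L).realize v = e1 L := by
  simp [tO, e1]
@[simp] lemma realize_tP (t u : L.Term α) (v : α → M) :
    (tP L t u).realize v = eadd L (t.realize v) (u.realize v) := by
  simp [tP, eadd]
@[simp] lemma realize_tM (t u : L.Term α) (v : α → M) :
    (tM L t u).realize v = emul L (t.realize v) (u.realize v) := by
  simp [tM, emul]

variable {L}

lemma Df.lt (t u : L.Term α) :
    Df L (fun v : α → M => elt L (t.realize v) (u.realize v)) :=
  (Df.rel₂ PASym.lt t u).congr (fun v => by simp [elt])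

end Terms

section Arith

variable {L : Language} [PASym L] {M : Type*} [L.Structure M]

lemma ind_sem (h : PAmod L M) {m : ℕ} {Q : (Fin m ⊕ Fin 1 → M) → Prop} (hQ : Df L Q)
    (w : Fin m → M) (h0 : Q (Sum.elim w ![e0 L]))
    (hs : ∀ x, Q (Sum.elim w ![x]) → Q (Sum.elim w ![eadd L x (e1 L)])) :
    ∀ x, Q (Sum.elim w ![x]) := by
  obtain ⟨φ, hφ⟩ := hQ
  intro x
  exact (hφ _).mpr (ind_principle h φ w ((hφ _).mp h0)
    (fun y hy => (hφ _).mp (hs y ((hφ _).mpr hy))) x)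

lemma ind1 (h : PAmod L M) {Q : M → Prop}
    (hQ : Df L (fun v : Fin 0 ⊕ Fin 1 → M => Q (v (Sum.inr 0))))
    (h0 : Q (e0 L)) (hs : ∀ x, Q x → Q (eadd L x (e1 L))) : ∀ x, Q x := by
  intro x
  have := ind_sem h hQ (default : Fin 0 → M) (by simpa using h0)
    (fun y hy => by simpa using hs y (by simpa using hy)) x
  simpa using this

lemma ind2 (h : PAmod L M) {Q : M → M → Prop}
    (hQ : Df L (fun v : Fin 1 ⊕ Fin 1 → M => Q (v (Sum.inl 0)) (v (Sum.inr 0))))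
    (a : M) (h0 : Q a (e0 L)) (hs : ∀ x, Q a x → Q a (eadd L x (e1 L))) : ∀ x, Q a x := by
  intro x
  have := ind_sem h hQ ![a] (by simpa using h0)
    (fun y hy => by simpa using hs y (by simpa using hy)) x
  simpa using this

lemma ind3 (h : PAmod L M) {Q : M → M → M → Prop}
    (hQ : Df L (fun v : Fin 2 ⊕ Fin 1 → M => Q (v (Sum.inl 0)) (v (Sum.inl 1)) (v (Sum.inr 0))))
    (a b : M) (h0 : Q a b (e0 L)) (hs : ∀ x, Q a b x → Q a b (eadd L x (e1 L))) :
    ∀ x, Q a b x := by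
  intro x
  have := ind_sem h hQ ![a, b] (by simpa using h0)
    (fun y hy => by simpa using hs y (by simpa using hy)) x
  simpa using this

variable (h : PAmod L M)
include h

lemma zero_addE (y : M) : eadd L (e0 L) y = y := by
  refine ind1 h (Q := fun y => eadd L (e0 L) y = y) ?_ (ax3 h _) (fun x hx => ?_) y
  · exact (Df.eq (tP L (tZ L) (Term.var (Sum.inr 0))) (Term.var (Sum.inr 0))).congr
      (fun v => by simp)
  · beta_reduce at hx ⊢; rw [ax4 h, hx]

lemma succ_addE (x y : M) : eadd L (eadd L x (e1 L)) y = eadd L (eadd L x y) (e1 L) := by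
  refine ind2 h (Q := fun a y => eadd L (eadd L a (e1 L)) y = eadd L (eadd L a y) (e1 L)) ?_ x (by beta_reduce; rw [ax3 h, ax3 h]) (fun z hz => ?_) y
  · exact (Df.eq (tP L (tP L (Term.var (Sum.inl 0)) (tO L)) (Term.var (Sum.inr 0)))
      (tP L (tP L (Term.var (Sum.inl 0)) (Term.var (Sum.inr 0))) (tO L))).congr
      (fun v => by simp)
  · beta_reduce at hz ⊢; rw [ax4 h, hz, ax4 h]

lemma add_assocE (x y z : M) : eadd L x (eadd L y z) = eadd L (eadd L x y) z := by
  refine ind3 h (Q := fun a b z => eadd L a (eadd L b z) = eadd L (eadd L a b) z) ?_ x y (by beta_reduce; rw [ax3 h, ax3 h]) (fun w hw => ?_) z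
  · exact (Df.eq (tP L (Term.var (Sum.inl 0)) (tP L (Term.var (Sum.inl 1)) (Term.var (Sum.inr 0))))
      (tP L (tP L (Term.var (Sum.inl 0)) (Term.var (Sum.inl 1))) (Term.var (Sum.inr 0)))).congr
      (fun v => by simp)
  · beta_reduce at hw ⊢; rw [ax4 h, ax4 h, hw, ax4 h]

lemma add_commE (x y : M) : eadd L x y = eadd L y x := by
  refine ind2 h (Q := fun a y => eadd L a y = eadd L y a) ?_ x (by beta_reduce; rw [ax3 h, zero_addE h]) (fun z hz => ?_) y
  · exact (Df.eq (tP L (Term.var (Sum.inl 0)) (Term.var (Sum.inr 0)))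
      (tP L (Term.var (Sum.inr 0)) (Term.var (Sum.inl 0)))).congr (fun v => by simp)
  · beta_reduce at hz ⊢; rw [ax4 h, hz, succ_addE h]

lemma add_right_cancelE {x y z : M} (hxz : eadd L x z = eadd L y z) : x = y := by
  have : ∀ z, eadd L x z = eadd L y z → x = y := by
    refine ind3 h (Q := fun a b z => eadd L a z = eadd L b z → a = b) ?_ x y (fun h0 => by beta_reduce at h0; rwa [ax3 h, ax3 h] at h0) (fun w hw => ?_)
    · exact ((Df.eq (tP L (Term.var (Sum.inl 0)) (Term.var (Sum.inr 0)))
        (tP L (Term.var (Sum.inl 1)) (Term.var (Sum.inr 0)))).imp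
        (Df.eq (Term.var (Sum.inl 0)) (Term.var (Sum.inl 1)))).congr (fun v => by simp)
    · beta_reduce at hw ⊢
      intro hws
      rw [ax4 h, ax4 h] at hws
      exact hw (ax2 h hws)
  exact this z hxz

lemma add_left_cancelE {x y z : M} (hxz : eadd L z x = eadd L z y) : x = y := by
  rw [add_commE h z x, add_commE h z y] at hxz
  exact add_right_cancelE h hxz

lemma eq_zero_of_add_eq_selfE {x t : M} (hxt : eadd L x t = x) : t = e0 L := by
  have : eadd L x t = eadd L x (e0 L) := by rw [ax3 h]; exact hxt
  exact add_left_cancelE h this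

lemma pred_exE (x : M) : x = e0 L ∨ ∃ w : M, x = eadd L w (e1 L) := by
  refine ind1 h (Q := fun x => x = e0 L ∨ ∃ w : M, x = eadd L w (e1 L)) ?_ (Or.inl rfl) (fun z _ => Or.inr ⟨z, rfl⟩) x
  · have hin : Df L (fun v : (Fin 0 ⊕ Fin 1) ⊕ Fin 1 → M =>
        v (Sum.inl (Sum.inr 0)) = eadd L (v (Sum.inr 0)) (e1 L)) :=
      (Df.eq (Term.var (Sum.inl (Sum.inr 0))) (tP L (Term.var (Sum.inr 0)) (tO L))).congr
        (fun v => by simp)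
    have hex : Df L (fun v : Fin 0 ⊕ Fin 1 → M =>
        ∃ w : M, v (Sum.inr 0) = eadd L w (e1 L)) := by
      refine (Df.ex hin).congr (fun v => ?_)
      constructor
      · rintro ⟨u, hu⟩; exact ⟨u 0, by simpa using hu⟩
      · rintro ⟨wx, hw⟩; exact ⟨![wx], by simpa using hw⟩
    exact (((Df.eq (Term.var (Sum.inr 0)) (tZ L)).congr (fun v => by simp)).or hex).congr
      (fun v => Iff.rfl)

lemma lt_iffE (x y : M) : elt L x y ↔ ∃ w : M, eadd L x (eadd L w (e1 L)) = y := by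
  rw [ax7 h]
  constructor
  · rintro ⟨w, hw⟩
    exact ⟨w, by rw [add_assocE h, add_commE h x w]; exact hw⟩
  · rintro ⟨w, hw⟩
    exact ⟨w, by rw [← add_commE h x w, ← add_assocE h]; exact hw⟩

lemma not_lt_zeroE (x : M) : ¬ elt L x (e0 L) := by
  rw [ax7 h]
  rintro ⟨w, hw⟩
  exact ax1 h _ hw

lemma lt_succ_selfE (x : M) : elt L x (eadd L x (e1 L)) := by
  rw [lt_iffE h]
  exact ⟨e0 L, by rw [zero_addE h]⟩

lemma lt_irreflE (x : M) : ¬ elt L x x := by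
  rw [lt_iffE h]
  rintro ⟨w, hw⟩
  exact ax1 h w (eq_zero_of_add_eq_selfE h hw)

lemma lt_transE {x y z : M} (hxy : elt L x y) (hyz : elt L y z) : elt L x z := by
  rw [lt_iffE h] at hxy hyz ⊢
  obtain ⟨w, hw⟩ := hxy
  obtain ⟨u, hu⟩ := hyz
  refine ⟨eadd L (eadd L w (e1 L)) u, ?_⟩
  rw [← hu, ← hw, ← ax4 h, add_assocE h]

lemma lt_succ_iffE (x y : M) : elt L x (eadd L y (e1 L)) ↔ (elt L x y ∨ x = y) := by
  constructor
  · intro hx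
    rw [lt_iffE h] at hx
    obtain ⟨w, hw⟩ := hx
    rcases pred_exE h w with h0 | ⟨u, hu⟩
    · subst h0
      right
      apply ax2 h
      rw [← hw, zero_addE h]
    · left
      rw [lt_iffE h]
      refine ⟨u, ?_⟩
      apply ax2 h
      rw [← hw, hu]
      rw [ax4 h, ax4 h, ax4 h]

  · rintro (hx | rfl)
    · rw [lt_iffE h] at hx ⊢
      obtain ⟨w, hw⟩ := hx
      exact ⟨eadd L w (e1 L), by rw [ax4 h, hw]⟩
    · exact lt_succ_selfE h x

lemma trichotomyE (x y : M) : elt L x y ∨ x = y ∨ elt L y x := by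
  have main : ∀ x : M, ∀ y : M, elt L x y ∨ x = y ∨ elt L y x := by
    refine ind1 h (Q := fun x => ∀ y : M, elt L x y ∨ x = y ∨ elt L y x) ?_ ?_ ?_
    · -- definability of fun x => ∀ y, x < y ∨ x = y ∨ y < x
      have hin : Df L (fun v : (Fin 0 ⊕ Fin 1) ⊕ Fin 1 → M =>
          elt L (v (Sum.inl (Sum.inr 0))) (v (Sum.inr 0)) ∨
            v (Sum.inl (Sum.inr 0)) = v (Sum.inr 0) ∨
            elt L (v (Sum.inr 0)) (v (Sum.inl (Sum.inr 0)))) := by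
        refine ((Df.lt (Term.var (Sum.inl (Sum.inr 0))) (Term.var (Sum.inr 0))).or
          ((Df.eq (Term.var (Sum.inl (Sum.inr 0))) (Term.var (Sum.inr 0))).or
            (Df.lt (Term.var (Sum.inr 0)) (Term.var (Sum.inl (Sum.inr 0)))))).congr
          (fun v => by simp)
      have := Df.all hin
      refine this.congr (fun v => ?_)
      constructor
      · intro hu y; have := hu ![y]; simpa using this
      · intro hu u; have := hu (u 0); simpa using this
    · intro y
      rcases pred_exE h y with h0 | ⟨w, hw⟩
      · right; left; exact h0.symm
      · left
        rw [lt_iffE h, hw]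
        exact ⟨w, by rw [zero_addE h]⟩
    · intro x ih y
      rcases ih y with hxy | rfl | hyx
      · rw [lt_iffE h] at hxy
        obtain ⟨w, hw⟩ := hxy
        rcases pred_exE h w with h0 | ⟨u, hu⟩
        · right; left
          rw [← hw, h0, zero_addE h]
        · left
          rw [lt_iffE h]
          refine ⟨u, ?_⟩
          rw [← hw, hu]
          rw [← add_assocE h, ← add_assocE h]
          congr 1
          rw [add_assocE h, add_assocE h]
          congr 1
          exact add_commE h _ _
      · right; right; exact lt_succ_selfE h x
      · right; right
        exact lt_transE h hyx (lt_succ_selfE h x)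
  exact main x y

lemma le_iffE (x y : M) : ele L x y ↔ ∃ d : M, eadd L x d = y := by
  constructor
  · rintro (hlt | rfl)
    · rw [lt_iffE h] at hlt
      obtain ⟨w, hw⟩ := hlt
      exact ⟨eadd L w (e1 L), hw⟩
    · exact ⟨e0 L, ax3 h x⟩
  · rintro ⟨d, hd⟩
    rcases pred_exE h d with h0 | ⟨u, hu⟩
    · right; rw [← hd, h0, ax3 h]
    · left; rw [lt_iffE h]; exact ⟨u, by rw [← hd, hu]⟩

lemma le_reflE (x : M) : ele L x x := Or.inr rfl

lemma le_add_rightE (x d : M) : ele L x (eadd L x d) := by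
  rw [le_iffE h]; exact ⟨d, rfl⟩

lemma add_le_add_leftE {x y : M} (hxy : ele L x y) (c : M) :
    ele L (eadd L c x) (eadd L c y) := by
  rw [le_iffE h] at hxy ⊢
  obtain ⟨d, hd⟩ := hxy
  exact ⟨d, by rw [← add_assocE h, hd]⟩

lemma add_lt_add_leftE {x y : M} (hxy : elt L x y) (c : M) :
    elt L (eadd L c x) (eadd L c y) := by
  rw [lt_iffE h] at hxy ⊢
  obtain ⟨d, hd⟩ := hxy
  refine ⟨d, ?_⟩
  rw [← hd, ax4 h, ax4 h, add_assocE h, add_assocE h]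

lemma lt_of_lt_of_leE {x y z : M} (hxy : elt L x y) (hyz : ele L y z) : elt L x z := by
  rcases hyz with hlt | rfl
  · exact lt_transE h hxy hlt
  · exact hxy

lemma lt_of_le_of_ltE {x y z : M} (hxy : ele L x y) (hyz : elt L y z) : elt L x z := by
  rcases hxy with hlt | rfl
  · exact lt_transE h hlt hyz
  · exact hyz

lemma le_transE {x y z : M} (hxy : ele L x y) (hyz : ele L y z) : ele L x z := by
  rcases hxy with hlt | rfl
  · exact Or.inl (lt_of_lt_of_leE h hlt hyz)
  · exact hyz

lemma left_distribE (x y z : M) : emul L x (eadd L y z) = eadd L (emul L x y) (emul L x z) := by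
  refine ind3 h (Q := fun a b z => emul L a (eadd L b z) = eadd L (emul L a b) (emul L a z)) ?_ x y (by beta_reduce; rw [ax3 h, ax5 h, ax3 h]) (fun w hw => ?_) z
  · exact (Df.eq (tM L (Term.var (Sum.inl 0)) (tP L (Term.var (Sum.inl 1)) (Term.var (Sum.inr 0))))
      (tP L (tM L (Term.var (Sum.inl 0)) (Term.var (Sum.inl 1)))
        (tM L (Term.var (Sum.inl 0)) (Term.var (Sum.inr 0))))).congr (fun v => by simp)
  · beta_reduce at hw ⊢; rw [ax4 h, ax6 h, hw, ax6 h, add_assocE h]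

lemma zero_mulE (y : M) : emul L (e0 L) y = e0 L := by
  refine ind1 h (Q := fun y => emul L (e0 L) y = e0 L) ?_ (ax5 h _) (fun x hx => ?_) y
  · exact (Df.eq (tM L (tZ L) (Term.var (Sum.inr 0))) (tZ L)).congr (fun v => by simp)
  · beta_reduce at hx ⊢; rw [ax6 h, hx, ax3 h]

lemma succ_mulE (x y : M) : emul L (eadd L x (e1 L)) y = eadd L (emul L x y) y := by
  refine ind2 h (Q := fun a y => emul L (eadd L a (e1 L)) y = eadd L (emul L a y) y) ?_ x (by beta_reduce; rw [ax5 h, ax5 h, ax3 h]) (fun z hz => ?_) y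
  · exact (Df.eq (tM L (tP L (Term.var (Sum.inl 0)) (tO L)) (Term.var (Sum.inr 0)))
      (tP L (tM L (Term.var (Sum.inl 0)) (Term.var (Sum.inr 0))) (Term.var (Sum.inr 0)))).congr
      (fun v => by simp)
  · beta_reduce at hz ⊢; rw [ax6 h, hz, ax6 h]
    -- ((x*z + z) + (x+1)) = ((x*z + x) + (z+1))
    rw [← add_assocE h, ← add_assocE h]
    congr 1
    rw [add_assocE h, add_assocE h, add_commE h z x]

lemma mul_commE (x y : M) : emul L x y = emul L y x := by
  refine ind2 h (Q := fun a y => emul L a y = emul L y a) ?_ x (by beta_reduce; rw [ax5 h, zero_mulE h]) (fun z hz => ?_) y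
  · exact (Df.eq (tM L (Term.var (Sum.inl 0)) (Term.var (Sum.inr 0)))
      (tM L (Term.var (Sum.inr 0)) (Term.var (Sum.inl 0)))).congr (fun v => by simp)
  · beta_reduce at hz ⊢; rw [ax6 h, hz, succ_mulE h]

lemma right_distribE (x y z : M) : emul L (eadd L x y) z = eadd L (emul L x z) (emul L y z) := by
  rw [mul_commE h, left_distribE h, mul_commE h z x, mul_commE h z y]

end Arith

end Dev5

section Dev6

open FirstOrder Language

variable {L : Language} [PASym L] {M : Type*} [L.Structure M]

lemma fun_eq_elim1 {γ : Type} (v : γ ⊕ Fin 1 → M) :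
    v = Sum.elim (fun i => v (Sum.inl i)) ![v (Sum.inr 0)] := by
  funext j
  cases j with
  | inl i => rfl
  | inr i =>
    have : i = 0 := Subsingleton.elim _ _
    subst this; rfl

/-- Least-number principle for definable predicates. -/
lemma lnpE (h : PAmod L M) {m : ℕ} {Q : (Fin m ⊕ Fin 1 → M) → Prop} (hQ : Df L Q)
    (w : Fin m → M) {a : M} (ha : Q (Sum.elim w ![a])) :
    ∃ b, Q (Sum.elim w ![b]) ∧ ∀ y, elt L y b → ¬ Q (Sum.elim w ![y]) := by
  by_contra hno
  push_neg at hno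
  -- R x := no element below x satisfies Q
  have hR : ∀ x, ∀ y, elt L y x → ¬ Q (Sum.elim w ![y]) := by
    have hgen : ∀ x, (fun v : Fin m ⊕ Fin 1 → M =>
        ∀ z : M, elt L z (v (Sum.inr 0)) → ¬ Q (Sum.elim (fun i => v (Sum.inl i)) ![z]))
          (Sum.elim w ![x]) := by
      refine ind_sem h (Q := fun v : Fin m ⊕ Fin 1 → M => ∀ z : M, elt L z (v (Sum.inr 0)) → ¬ Q (Sum.elim (fun i => v (Sum.inl i)) ![z])) ?_ w ?_ ?_
      · -- definability
        have hg : Df L (fun v' : (Fin m ⊕ Fin 1) ⊕ Fin 1 → M =>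
            Q (Sum.elim (fun i => v' (Sum.inl (Sum.inl i))) ![v' (Sum.inr 0)])) := by
          refine (hQ.relabel (Sum.elim (fun i => Sum.inl (Sum.inl i))
            (fun _ => Sum.inr 0))).congr (fun v' => ?_)
          refine iff_of_eq (congrArg Q ?_)
          funext j
          cases j with
          | inl i => rfl
          | inr i =>
            have : i = 0 := Subsingleton.elim _ _
            subst this; rfl
        have hin : Df L (fun v' : (Fin m ⊕ Fin 1) ⊕ Fin 1 → M =>
            elt L (v' (Sum.inr 0)) (v' (Sum.inl (Sum.inr 0))) →
              ¬ Q (Sum.elim (fun i => v' (Sum.inl (Sum.inl i))) ![v' (Sum.inr 0)])) :=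
          (Df.lt (Term.var (Sum.inr 0)) (Term.var (Sum.inl (Sum.inr 0)))).imp hg.not
        refine (Df.all hin).congr (fun v => ?_)
        constructor
        · intro hu z hz
          have := hu ![z] (by simpa using hz)
          simpa using this
        · intro hu t ht
          have := hu (t 0) (by simpa using ht)
          simpa using this
      · intro z hz
        exact absurd hz (by simpa using not_lt_zeroE h z)
      · intro x ih
        beta_reduce at ih ⊢
        intro z hz
        simp only [Sum.elim_inr] at hz
        rcases (lt_succ_iffE h z x).mp (by simpa using hz) with hlt | rfl
        · exact ih z (by simpa using hlt)
        · intro hQz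
          obtain ⟨y, hy, hQy⟩ := hno z (by
            refine (iff_of_eq (congrArg Q ?_)).mp hQz
            funext j
            cases j with
            | inl i => rfl
            | inr i =>
              have : i = 0 := Subsingleton.elim _ _
              subst this; rfl)
          exact ih y hy (by
            refine (iff_of_eq (congrArg Q ?_)).mp hQy
            funext j
            cases j with
            | inl i => rfl
            | inr i =>
              have : i = 0 := Subsingleton.elim _ _
              subst this; rfl)
    intro x y hy
    have := hgen x y (by simpa using hy)
    refine fun hq => this ?_
    refine (iff_of_eq (congrArg Q ?_)).mp hq
    funext j
    cases j with
    | inl i => rfl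
    | inr i =>
      have : i = 0 := Subsingleton.elim _ _
      subst this; rfl
  obtain ⟨y, hy, hQy⟩ := hno a ha
  exact hR a y hy hQy

/-- Minimization of a definable predicate is definable. -/
lemma Df.minimized {n : ℕ} {Θ : (Fin n ⊕ Fin 1 → M) → Prop} (hΘ : Df L Θ) :
    Df L (fun v : Fin n ⊕ Fin 1 → M => Θ v ∧
      ∀ z : M, elt L z (v (Sum.inr 0)) → ¬ Θ (Sum.elim (fun i => v (Sum.inl i)) ![z])) := by
  have hg : Df L (fun v' : (Fin n ⊕ Fin 1) ⊕ Fin 1 → M =>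
      Θ (Sum.elim (fun i => v' (Sum.inl (Sum.inl i))) ![v' (Sum.inr 0)])) := by
    refine (hΘ.relabel (Sum.elim (fun i => Sum.inl (Sum.inl i)) (fun _ => Sum.inr 0))).congr
      (fun v' => ?_)
    refine iff_of_eq (congrArg Θ ?_)
    funext j
    cases j with
    | inl i => rfl
    | inr i =>
      have : i = 0 := Subsingleton.elim _ _
      subst this; rfl
  have hin : Df L (fun v' : (Fin n ⊕ Fin 1) ⊕ Fin 1 → M =>
      elt L (v' (Sum.inr 0)) (v' (Sum.inl (Sum.inr 0))) →
        ¬ Θ (Sum.elim (fun i => v' (Sum.inl (Sum.inl i))) ![v' (Sum.inr 0)])) :=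
    (Df.lt (Term.var (Sum.inr 0)) (Term.var (Sum.inl (Sum.inr 0)))).imp hg.not
  refine (hΘ.and (Df.all hin)).congr (fun v => ?_)
  refine and_congr Iff.rfl ?_
  constructor
  · intro hu z hz
    have := hu ![z] (by simpa using hz)
    simpa using this
  · intro hu t ht
    have := hu (t 0) (by simpa using ht)
    simpa using this

/-- Uniqueness of minimal witnesses. -/
lemma min_uniqE (h : PAmod L M) {P : M → Prop} {b b' : M}
    (hb : P b) (hmb : ∀ y, elt L y b → ¬ P y)
    (hb' : P b') (hmb' : ∀ y, elt L y b' → ¬ P y) : b = b' := by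
  rcases trichotomyE h b b' with hlt | heq | hlt
  · exact absurd hb (hmb' b hlt)
  · exact heq
  · exact absurd hb' (hmb b' hlt)

/-- `b` is definable from `a` (semantic form). -/
def DclP (L : Language) {M : Type*} [L.Structure M] (a b : M) : Prop :=
  ∃ Q : (Fin 1 ⊕ Fin 1 → M) → Prop, Df L Q ∧ ∀ y : M, Q (Sum.elim ![a] ![y]) ↔ y = b

lemma dclP_iff_dcl {a b : M} : DclP L a b ↔ b ∈ dcl L a := by
  constructor
  · rintro ⟨Q, ⟨φ, hφ⟩, hspec⟩
    refine ⟨φ.relabel (Sum.elim (fun _ => (0 : Fin 2)) (fun _ => (1 : Fin 2))), fun y => ?_⟩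
    rw [Formula.realize_relabel]
    rw [← hspec y]
    refine Iff.symm ((hφ _).trans (iff_of_eq (congrArg φ.Realize ?_)))
    funext j
    cases j with
    | inl i =>
      have : i = 0 := Subsingleton.elim _ _
      subst this; rfl
    | inr i =>
      have : i = 0 := Subsingleton.elim _ _
      subst this; rfl
  · rintro ⟨φ, hφ⟩
    refine ⟨fun v => φ.Realize (v ∘ (![Sum.inl 0, Sum.inr 0] : Fin 2 → Fin 1 ⊕ Fin 1)),
      (Df.of_formula φ).relabel _, fun y => ?_⟩
    rw [← hφ y]
    refine iff_of_eq (congrArg φ.Realize ?_)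
    funext j
    fin_cases j <;> rfl

/-- Closure of definability-from-`a` under definable minimization with definable parameters. -/
lemma dcl_min (h : PAmod L M) {n : ℕ} {Θ : (Fin n ⊕ Fin 1 → M) → Prop} (hΘ : Df L Θ)
    (a : M) (u : Fin n → M) (hu : ∀ i, DclP L a (u i)) {y0 : M}
    (hex : Θ (Sum.elim u ![y0])) :
    ∃ b, DclP L a b ∧ Θ (Sum.elim u ![b]) ∧ ∀ y, elt L y b → ¬ Θ (Sum.elim u ![y]) := by
  classical
  -- pass to the minimized predicate
  set Θ' : (Fin n ⊕ Fin 1 → M) → Prop := fun v => Θ v ∧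
    ∀ z : M, elt L z (v (Sum.inr 0)) → ¬ Θ (Sum.elim (fun i => v (Sum.inl i)) ![z]) with hΘ'def
  have hΘ' : Df L Θ' := hΘ.minimized
  obtain ⟨b, hb, hbmin⟩ := lnpE h hΘ u hex
  have hb' : Θ' (Sum.elim u ![b]) := by
    refine ⟨hb, fun z hz => ?_⟩
    simp only [Sum.elim_inr] at hz
    have := hbmin z (by simpa using hz)
    refine fun hq => this ?_
    refine (iff_of_eq (congrArg Θ ?_)).mp hq
    funext j
    cases j with
    | inl i => rfl
    | inr i =>
      have : i = 0 := Subsingleton.elim _ _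
      subst this; rfl
  have huniq : ∀ y, Θ' (Sum.elim u ![y]) → y = b := by
    intro y hy
    refine min_uniqE h (P := fun t => Θ (Sum.elim u ![t])) (b := y) (b' := b) hy.1 ?_ hb'.1 ?_
    · intro t ht
      have := hy.2 t (by simpa using ht)
      refine fun hq => this ?_
      refine (iff_of_eq (congrArg Θ ?_)).mp hq
      funext j
      cases j with
      | inl i => rfl
      | inr i =>
        have : i = 0 := Subsingleton.elim _ _
        subst this; rfl
    · intro t ht
      have := hb'.2 t (by simpa using ht)
      refine fun hq => this ?_
      refine (iff_of_eq (congrArg Θ ?_)).mp hq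
      funext j
      cases j with
      | inl i => rfl
      | inr i =>
        have : i = 0 := Subsingleton.elim _ _
        subst this; rfl
  -- choose defining predicates for the parameters
  choose Qs hQsdf hQsspec using hu
  -- the defining predicate for b from a
  refine ⟨b, ⟨fun v => ∃ t : Fin n → M,
      (∀ i, Qs i (Sum.elim ![v (Sum.inl 0)] ![t i])) ∧ Θ' (Sum.elim t ![v (Sum.inr 0)]),
      ?_, ?_⟩, hb, hbmin⟩
  · -- definability
    -- component i of the conjunction
    have hcomp : ∀ i : Fin n, Df L (fun v' : (Fin 1 ⊕ Fin 1) ⊕ Fin n → M =>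
        Qs i (Sum.elim ![v' (Sum.inl (Sum.inl 0))] ![v' (Sum.inr i)])) := by
      intro i
      refine ((hQsdf i).relabel (Sum.elim (fun _ => Sum.inl (Sum.inl 0))
        (fun _ => Sum.inr i))).congr (fun v' => ?_)
      refine iff_of_eq (congrArg (Qs i) ?_)
      funext j
      cases j with
      | inl k =>
        have : k = 0 := Subsingleton.elim _ _
        subst this; rfl
      | inr k =>
        have : k = 0 := Subsingleton.elim _ _
        subst this; rfl
    have hTh : Df L (fun v' : (Fin 1 ⊕ Fin 1) ⊕ Fin n → M =>
        Θ' (Sum.elim (fun i => v' (Sum.inr i)) ![v' (Sum.inl (Sum.inr 0))])) := by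
      refine (hΘ'.relabel (Sum.elim (fun i => Sum.inr i)
        (fun _ => Sum.inl (Sum.inr 0)))).congr (fun v' => ?_)
      refine iff_of_eq (congrArg Θ' ?_)
      funext j
      cases j with
      | inl i => rfl
      | inr i =>
        have : i = 0 := Subsingleton.elim _ _
        subst this; rfl
    have hbig := ((Df.finConj _ hcomp).and hTh).ex
    refine hbig.congr (fun v => ?_)
    constructor
    · rintro ⟨t, h1, h2⟩
      exact ⟨t, fun i => by simpa using h1 i, by simpa using h2⟩
    · rintro ⟨t, h1, h2⟩
      exact ⟨t, fun i => by simpa using h1 i, by simpa using h2⟩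
  · -- the spec
    intro y
    constructor
    · rintro ⟨t, h1, h2⟩
      have ht : ∀ i, t i = u i := by
        intro i
        have := (hQsspec i (t i)).mp (by simpa using h1 i)
        exact this
      have : t = u := funext ht
      subst this
      exact huniq y (by simpa using h2)
    · rintro rfl
      exact ⟨u, fun i => by simpa using (hQsspec i (u i)).mpr rfl, by simpa using hb'⟩

end Dev6

section Dev7

open FirstOrder Language

variable {L : Language} [PASym L] {M : Type*} [L.Structure M]

/-- The Sum.elim-congruence helper. -/
lemma elim1_congr {P : (Fin 1 ⊕ Fin 1 → M) → Prop} {a y : M} {v : Fin 1 ⊕ Fin 1 → M}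
    (hv : v (Sum.inl 0) = a) (hy : v (Sum.inr 0) = y) :
    P v ↔ P (Sum.elim ![a] ![y]) := by
  refine iff_of_eq (congrArg P ?_)
  funext j
  cases j with
  | inl i =>
    have : i = 0 := Subsingleton.elim _ _
    subst this; simpa using hv
  | inr i =>
    have : i = 0 := Subsingleton.elim _ _
    subst this; simpa using hy

lemma dclP_self (a : M) : DclP L a a := by
  refine ⟨fun v => v (Sum.inr 0) = v (Sum.inl 0),
    (Df.eq (Term.var (Sum.inr 0)) (Term.var (Sum.inl 0))).congr (fun v => by simp), fun y => ?_⟩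
  simp

/-- A uniquely definable value with definable parameters is definable. -/
lemma dclP_fnDf (h : PAmod L M) {n : ℕ} {Θ : (Fin n ⊕ Fin 1 → M) → Prop} (hΘ : Df L Θ)
    (a : M) (u : Fin n → M) (hu : ∀ i, DclP L a (u i)) (b : M)
    (hiff : ∀ y, Θ (Sum.elim u ![y]) ↔ y = b) : DclP L a b := by
  obtain ⟨b', hb', hθ, _⟩ := dcl_min h hΘ a u hu (y0 := b) ((hiff b).mpr rfl)
  rwa [(hiff b').mp hθ] at hb'

lemma dclP_trans (h : PAmod L M) {a b c : M} (hab : DclP L a b) (hbc : DclP L b c) :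
    DclP L a c := by
  obtain ⟨Q1, hQ1, hs1⟩ := hab
  obtain ⟨Q2, hQ2, hs2⟩ := hbc
  refine ⟨fun v => ∃ t : M, Q1 (Sum.elim ![v (Sum.inl 0)] ![t]) ∧
    Q2 (Sum.elim ![t] ![v (Sum.inr 0)]), ?_, fun y => ?_⟩
  · -- definability
    have h1 : Df L (fun v' : (Fin 1 ⊕ Fin 1) ⊕ Fin 1 → M =>
        Q1 (Sum.elim ![v' (Sum.inl (Sum.inl 0))] ![v' (Sum.inr 0)])) := by
      refine (hQ1.relabel (Sum.elim (fun _ => Sum.inl (Sum.inl 0)) (fun _ => Sum.inr 0))).congr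
        (fun v' => ?_)
      exact elim1_congr rfl rfl
    have h2 : Df L (fun v' : (Fin 1 ⊕ Fin 1) ⊕ Fin 1 → M =>
        Q2 (Sum.elim ![v' (Sum.inr 0)] ![v' (Sum.inl (Sum.inr 0))])) := by
      refine (hQ2.relabel (Sum.elim (fun _ => Sum.inr 0) (fun _ => Sum.inl (Sum.inr 0)))).congr
        (fun v' => ?_)
      exact elim1_congr rfl rfl
    refine ((h1.and h2).ex).congr (fun v => ?_)
    constructor
    · rintro ⟨t, h1', h2'⟩
      exact ⟨t 0, by simpa using h1', by simpa using h2'⟩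
    · rintro ⟨t, h1', h2'⟩
      exact ⟨![t], by simpa using h1', by simpa using h2'⟩
  · constructor
    · rintro ⟨t, h1', h2'⟩
      have h1'' : Q1 (Sum.elim ![a] ![t]) := by
        refine ((elim1_congr (P := Q1) ?_ ?_).mp h1') <;> simp
      have htb : t = b := (hs1 t).mp h1''
      have h2'' : Q2 (Sum.elim ![b] ![y]) := by
        rw [← htb]
        refine ((elim1_congr (P := Q2) ?_ ?_).mp h2') <;> simp
      exact (hs2 y).mp h2''
    · rintro rfl
      refine ⟨b, ?_, ?_⟩
      · refine (elim1_congr (P := Q1) ?_ ?_).mpr ((hs1 b).mpr rfl) <;> simp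
      · refine (elim1_congr (P := Q2) ?_ ?_).mpr ((hs2 _).mpr rfl) <;> simp

/-- Cantor-style pairing. -/
def epair (a b : M) : M := eadd L (emul L (eadd L a b) (eadd L a b)) a

/-- The pairing term. -/
def pairT {α : Type} (t u : L.Term α) : L.Term α := tP L (tM L (tP L t u) (tP L t u)) t

@[simp] lemma realize_pairT {α : Type} (t u : L.Term α) (v : α → M) :
    (pairT (L := L) t u).realize v = epair (L := L) (t.realize v) (u.realize v) := by
  simp [pairT, epair]

variable (h : PAmod L M)
include h

lemma lt_add_succE (x d : M) : elt L x (eadd L x (eadd L d (e1 L))) := by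
  rw [lt_iffE h]; exact ⟨d, rfl⟩

lemma le_succ_of_ltE {x y : M} (hxy : elt L x y) : ele L (eadd L x (e1 L)) y := by
  rw [lt_iffE h] at hxy
  obtain ⟨w, hw⟩ := hxy
  rw [le_iffE h]
  exact ⟨w, by rw [← hw, ax4 h, succ_addE h, add_commE h x w]⟩

lemma sq_le_sqE {x y : M} (hxy : ele L x y) : ele L (emul L x x) (emul L y y) := by
  rw [le_iffE h] at hxy
  obtain ⟨d, hd⟩ := hxy
  rw [le_iffE h]
  refine ⟨eadd L (emul L x d) (eadd L (emul L d x) (emul L d d)), ?_⟩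
  rw [← hd, right_distribE h, left_distribE h, left_distribE h]
  rw [← add_assocE h]

lemma lt_pair_boundE {s a : M} (ha : ele L a s) :
    elt L (eadd L (emul L s s) a)
      (emul L (eadd L s (e1 L)) (eadd L s (e1 L))) := by
  have hexp : emul L (eadd L s (e1 L)) (eadd L s (e1 L)) =
      eadd L (eadd L (emul L s s) s) (eadd L s (e1 L)) := by
    rw [ax6 h, succ_mulE h]
  rw [hexp]
  have h1 : ele L (eadd L (emul L s s) a) (eadd L (emul L s s) s) :=
    add_le_add_leftE h ha _
  refine lt_of_le_of_ltE h h1 ?_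
  exact lt_add_succE h _ _

lemma le_self_pair_sE (a b : M) : ele L a (eadd L a b) := le_add_rightE h a b

lemma pair_injE {a b a' b' : M} (hp : epair (L := L) a b = epair (L := L) a' b') :
    a = a' ∧ b = b' := by
  have hp' : eadd L (emul L (eadd L a b) (eadd L a b)) a
      = eadd L (emul L (eadd L a' b') (eadd L a' b')) a' := hp
  have key : eadd L a b = eadd L a' b' := by
    rcases trichotomyE h (eadd L a b) (eadd L a' b') with hlt | heq | hlt
    · exfalso
      have h1 := lt_pair_boundE h (s := eadd L a b) (a := a) (le_add_rightE h a b)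
      have h2 := sq_le_sqE h (le_succ_of_ltE h hlt)
      have h3 : ele L (emul L (eadd L a' b') (eadd L a' b'))
          (eadd L (emul L (eadd L a' b') (eadd L a' b')) a') := le_add_rightE h _ _
      have h4 := lt_of_lt_of_leE h (lt_of_lt_of_leE h h1 h2) h3
      rw [← hp'] at h4
      exact lt_irreflE h _ h4
    · exact heq
    · exfalso
      have h1 := lt_pair_boundE h (s := eadd L a' b') (a := a') (le_add_rightE h a' b')
      have h2 := sq_le_sqE h (le_succ_of_ltE h hlt)
      have h3 : ele L (emul L (eadd L a b) (eadd L a b))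
          (eadd L (emul L (eadd L a b) (eadd L a b)) a) := le_add_rightE h _ _
      have h4 := lt_of_lt_of_leE h (lt_of_lt_of_leE h h1 h2) h3
      rw [hp'] at h4
      exact lt_irreflE h _ h4
  rw [key] at hp'
  have ha : a = a' := add_left_cancelE h hp'
  refine ⟨ha, ?_⟩
  rw [← ha] at key
  exact add_left_cancelE h key

omit h

/-- First component of a pair is definable from the pair. -/
lemma dclP_pair_fst (h : PAmod L M) (a b : M) : DclP L (epair (L := L) a b) a := by
  refine dclP_fnDf h (n := 1)
    (Θ := fun v : Fin 1 ⊕ Fin 1 → M => ∃ t : M, epair (L := L) (v (Sum.inr 0)) t = v (Sum.inl 0))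
    ?_ (epair (L := L) a b) ![epair (L := L) a b] (fun i => by simp only [Matrix.cons_val_fin_one]; exact dclP_self _) a (fun y => ?_)
  · have hin : Df L (fun v' : (Fin 1 ⊕ Fin 1) ⊕ Fin 1 → M =>
        epair (L := L) (v' (Sum.inl (Sum.inr 0))) (v' (Sum.inr 0)) = v' (Sum.inl (Sum.inl 0))) :=
      (Df.eq (pairT (Term.var (Sum.inl (Sum.inr 0))) (Term.var (Sum.inr 0)))
        (Term.var (Sum.inl (Sum.inl 0)))).congr (fun v => by simp)
    refine (Df.ex hin).congr (fun v => ?_)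
    constructor
    · rintro ⟨t, ht⟩; exact ⟨t 0, by simpa using ht⟩
    · rintro ⟨t, ht⟩; exact ⟨![t], by simpa using ht⟩
  · simp only [Sum.elim_inr, Sum.elim_inl]
    constructor
    · rintro ⟨t, ht⟩
      have : ![y] 0 = y := rfl
      rw [this] at ht
      have h2 : ![epair (L := L) a b] 0 = epair (L := L) a b := rfl
      rw [h2] at ht
      exact (pair_injE h ht).1
    · rintro rfl
      exact ⟨b, by simp⟩

/-- Second component of a pair is definable from the pair. -/
lemma dclP_pair_snd (h : PAmod L M) (a b : M) : DclP L (epair (L := L) a b) b := by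
  refine dclP_fnDf h (n := 1)
    (Θ := fun v : Fin 1 ⊕ Fin 1 → M => ∃ t : M, epair (L := L) t (v (Sum.inr 0)) = v (Sum.inl 0))
    ?_ (epair (L := L) a b) ![epair (L := L) a b] (fun i => by simp only [Matrix.cons_val_fin_one]; exact dclP_self _) b (fun y => ?_)
  · have hin : Df L (fun v' : (Fin 1 ⊕ Fin 1) ⊕ Fin 1 → M =>
        epair (L := L) (v' (Sum.inr 0)) (v' (Sum.inl (Sum.inr 0))) = v' (Sum.inl (Sum.inl 0))) :=
      (Df.eq (pairT (Term.var (Sum.inr 0)) (Term.var (Sum.inl (Sum.inr 0))))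
        (Term.var (Sum.inl (Sum.inl 0)))).congr (fun v => by simp)
    refine (Df.ex hin).congr (fun v => ?_)
    constructor
    · rintro ⟨t, ht⟩; exact ⟨t 0, by simpa using ht⟩
    · rintro ⟨t, ht⟩; exact ⟨![t], by simpa using ht⟩
  · simp only [Sum.elim_inr, Sum.elim_inl]
    constructor
    · rintro ⟨t, ht⟩
      have : ![y] 0 = y := rfl
      rw [this] at ht
      have h2 : ![epair (L := L) a b] 0 = epair (L := L) a b := rfl
      rw [h2] at ht
      exact (pair_injE h ht).2
    · rintro rfl
      exact ⟨a, by simp⟩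

/-- Coding of tuples. -/
def cSeq : ∀ {n : ℕ}, (Fin n → M) → M
  | 0, _ => e0 L
  | _ + 1, v => epair (L := L) (v 0) (cSeq (fun i => v i.succ))

lemma dclP_cSeq (h : PAmod L M) : ∀ {n : ℕ} (v : Fin n → M) (i : Fin n),
    DclP L (cSeq (L := L) v) (v i) := by
  intro n
  induction n with
  | zero => exact fun v i => i.elim0
  | succ n ih =>
    intro v i
    rcases Fin.eq_zero_or_eq_succ i with rfl | ⟨j, rfl⟩
    · exact dclP_pair_fst h _ _
    · exact dclP_trans h (dclP_pair_snd h (v 0) (cSeq (L := L) (fun i => v i.succ)))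
        (ih (fun i => v i.succ) j)

end Dev7

section Dev8

open FirstOrder Language

section Generic

variable {L : Language} {M : Type*} [L.Structure M]

/-- Realizations of bounded formulas over `Empty` with a distinguished last variable
are definable predicates. -/
lemma df_bf_snoc {k : ℕ} (ψ : L.BoundedFormula Empty (k + 1)) :
    Df L (fun v : Fin k ⊕ Fin 1 → M =>
      ψ.Realize (default : Empty → M)
        (Fin.snoc (fun i => v (Sum.inl i)) (v (Sum.inr 0)))) := by
  have key : ∀ (u1 u2 : Empty → M) (y1 y2 : Fin (k+1) → M), y1 = y2 →
      (ψ.Realize u1 y1 ↔ ψ.Realize u2 y2) := by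
    rintro u1 u2 y1 y2 rfl
    rw [Subsingleton.elim u1 u2]
  refine ((Df.of_formula ψ.toFormula).relabel
    (Sum.elim (fun e => e.elim)
      (fun j => Fin.lastCases (Sum.inr 0) (fun i => Sum.inl i) j))).congr (fun v => ?_)
  rw [BoundedFormula.realize_toFormula]
  refine key _ _ _ _ ?_
  funext j
  refine Fin.lastCases ?_ ?_ j
  · simp [Fin.snoc_last]
  · intro i
    simp [Fin.snoc_castSucc]

/-- Substructures contain values of `cSeq` on their elements. -/
lemma cSeq_mem [PASym L] (S : L.Substructure M) :
    ∀ {n : ℕ} (v : Fin n → M), (∀ i, v i ∈ S) → cSeq (L := L) v ∈ S := by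
  have hz : e0 L ∈ S := by
    have := S.fun_mem (PASym.z (L := L)) ![] (fun i => i.elim0)
    simpa [e0] using this
  have hadd : ∀ a b : M, a ∈ S → b ∈ S → eadd L a b ∈ S := by
    intro a b ha hb
    have := S.fun_mem (PASym.pl (L := L)) ![a, b] (fun i => by fin_cases i <;> simpa)
    simpa [eadd] using this
  have hmul : ∀ a b : M, a ∈ S → b ∈ S → emul L a b ∈ S := by
    intro a b ha hb
    have := S.fun_mem (PASym.ml (L := L)) ![a, b] (fun i => by fin_cases i <;> simpa)
    simpa [emul] using this
  have hpair : ∀ a b : M, a ∈ S → b ∈ S → epair (L := L) a b ∈ S := by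
    intro a b ha hb
    exact hadd _ _ (hmul _ _ (hadd _ _ ha hb) (hadd _ _ ha hb)) ha
  intro n
  induction n with
  | zero => intro v _; exact hz
  | succ n ih =>
    intro v hv
    exact hpair _ _ (hv 0) (ih (fun i => v i.succ) (fun i => hv i.succ))

end Generic

section Lift

variable {M : Type*} [arith.Structure M] (X : Set M)

/-- `withX X` is an expansion of the arithmetic structure. -/
lemma withX_expansion :
    @LHom.IsExpansionOn arith xArith LHom.sumInl M _ (withX X) := by
  letI : xArith.Structure M := withX X
  constructor
  · intro n f x
    rfl
  · intro n R x
    rfl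

/-- Arithmetic-definable predicates are definable in the expanded language. -/
lemma Df.lift {α : Type} {P : (α → M) → Prop} (hP : Df arith P) :
    @Df xArith M (withX X) α P := by
  letI : xArith.Structure M := withX X
  haveI := withX_expansion X
  obtain ⟨φ, hφ⟩ := hP
  refine ⟨LHom.sumInl.onFormula φ, fun v => ?_⟩
  rw [LHom.realize_onFormula]
  exact hφ v

lemma DclP.lift {a b : M} (h : DclP arith a b) : @DclP xArith M (withX X) a b := by
  obtain ⟨Q, hQ, hs⟩ := h
  exact ⟨Q, hQ.lift X, hs⟩

/-- The semantic operations of `xArith` on `(M, X)` agree with those of `arith`. -/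
lemma e0_withX : @e0 xArith _ M (withX X) = e0 arith := rfl
lemma e1_withX : @e1 xArith _ M (withX X) = e1 arith := rfl
lemma eadd_withX : @eadd xArith _ M (withX X) = eadd arith := rfl
lemma emul_withX : @emul xArith _ M (withX X) = emul arith := rfl
lemma elt_withX : @elt xArith _ M (withX X) = elt arith := rfl
lemma epair_withX : @epair xArith _ M (withX X) = epair (L := arith) := rfl
lemma cSeq_withX {n : ℕ} : @cSeq xArith _ M (withX X) n = cSeq (L := arith) := by
  induction n with
  | zero => rfl
  | succ n ih =>
    funext v
    show @epair xArith _ M (withX X) (v 0) _ = _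
    rw [epair_withX, ih]
    rfl

end Lift

section Elem

lemma bf0_congr {L : Language} {N : Type*} [L.Structure N] {α : Type}
    (φ : L.BoundedFormula α 0) {v1 v2 : α → N} (y1 y2 : Fin 0 → N) (hv : v1 = v2) :
    BoundedFormula.Realize φ v1 y1 ↔ BoundedFormula.Realize φ v2 y2 := by
  subst hv
  rw [Subsingleton.elim y1 y2]

lemma relabel2_realize {L : Language} {N : Type*} [L.Structure N] (φ : L.Formula (Fin 2))
    (v xs : Fin 1 → N) :
    BoundedFormula.Realize
      (BoundedFormula.relabel (![Sum.inl 0, Sum.inr 0] : Fin 2 → Fin 1 ⊕ Fin 1) φ) v xs ↔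
      Formula.Realize φ ![v 0, xs 0] := by
  rw [BoundedFormula.realize_relabel]
  refine bf0_congr φ _ _ ?_
  funext j
  fin_cases j <;> simp

variable {M : Type*} [arith.Structure M]

/-- Elements arithmetically definable from an element of an elementary substructure
belong to it. -/
lemma mem_of_dclP (K : arith.ElementarySubstructure M) {c b : M}
    (hc : c ∈ K) (hb : DclP arith c b) : b ∈ K := by
  rw [dclP_iff_dcl] at hb
  obtain ⟨φ, hφ⟩ := hb
  set θ : arith.BoundedFormula (Fin 1) 1 :=
    BoundedFormula.relabel (![Sum.inl 0, Sum.inr 0] : Fin 2 → Fin 1 ⊕ Fin 1) φ with hθdef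
  have hexM : Formula.Realize (L := arith) (M := M) θ.ex ![c] := by
    have : BoundedFormula.Realize (M := M) θ.ex ![c] default := by
      rw [BoundedFormula.realize_ex]
      refine ⟨b, (relabel2_realize φ ![c] (Fin.snoc default b)).mpr ?_⟩
      have hb := (hφ b).mpr rfl
      refine (bf0_congr φ default default ?_).mp hb
      funext j
      fin_cases j <;> simp [Fin.snoc]
    exact this
  have hexK : Formula.Realize (M := K) θ.ex ![⟨c, hc⟩] := by
    refine (K.isElementary (n := 1) θ.ex ![⟨c, hc⟩]).mp ?_
    refine (bf0_congr θ.ex default default ?_).mp hexM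
    funext j
    fin_cases j
    rfl
  have : BoundedFormula.Realize (M := K) θ.ex ![⟨c, hc⟩] default := hexK
  rw [BoundedFormula.realize_ex] at this
  obtain ⟨d, hd⟩ := this
  have hdK : Formula.Realize (M := K) φ ![⟨c, hc⟩, d] := by
    have hKd := (relabel2_realize (N := ↥K) φ ![⟨c, hc⟩] (Fin.snoc default d)).mp hd
    refine (bf0_congr φ default default ?_).mp hKd
    funext j
    fin_cases j <;> simp [Fin.snoc]
  have hdM : Formula.Realize (M := M) φ ![c, (d : M)] := by
    have := (K.isElementary (n := 2) φ ![⟨c, hc⟩, d]).mpr hdK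
    refine (bf0_congr φ default default ?_).mp this
    funext j
    fin_cases j <;> rfl
  have : (d : M) = b := (hφ _).mp hdM
  rw [← this]
  exact d.2

end Elem

end Dev8

section Dev9

open FirstOrder Language

section GenericCl

variable {L : Language} [PASym L] {M : Type*} [L.Structure M] (h : PAmod L M)
include h

lemma elimn_congr' {n : ℕ} {P : (Fin n ⊕ Fin 1 → M) → Prop} {u : Fin n → M} {y : M}
    {v : Fin n ⊕ Fin 1 → M} (hl : ∀ i, v (Sum.inl i) = u i) (hr : v (Sum.inr 0) = y) :
    P v ↔ P (Sum.elim u ![y]) := by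
  refine iff_of_eq (congrArg P ?_)
  funext j
  cases j with
  | inl i => simpa using hl i
  | inr i =>
    have : i = 0 := Subsingleton.elim _ _
    subst this
    simpa using hr

omit h

lemma elimn_congr {n : ℕ} {P : (Fin n ⊕ Fin 1 → M) → Prop} {u : Fin n → M} {y : M}
    {v : Fin n ⊕ Fin 1 → M} (hl : ∀ i, v (Sum.inl i) = u i) (hr : v (Sum.inr 0) = y) :
    P v ↔ P (Sum.elim u ![y]) := by
  refine iff_of_eq (congrArg P ?_)
  funext j
  cases j with
  | inl i => simpa using hl i
  | inr i =>
    have : i = 0 := Subsingleton.elim _ _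
    subst this
    simpa using hr

include h

lemma dclP_e0 (a : M) : DclP L a (e0 L) := by
  refine dclP_fnDf h (n := 0)
    (Θ := fun v : Fin 0 ⊕ Fin 1 → M => v (Sum.inr 0) = e0 L) ?_ a default
    (fun i => i.elim0) (e0 L) (fun y => ?_)
  · exact (Df.eq (Term.var (Sum.inr 0)) (tZ L)).congr (fun v => by simp)
  · simp

lemma dclP_e1 (a : M) : DclP L a (e1 L) := by
  refine dclP_fnDf h (n := 0)
    (Θ := fun v : Fin 0 ⊕ Fin 1 → M => v (Sum.inr 0) = e1 L) ?_ a default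
    (fun i => i.elim0) (e1 L) (fun y => ?_)
  · exact (Df.eq (Term.var (Sum.inr 0)) (tO L)).congr (fun v => by simp)
  · simp

lemma dclP_add {a b1 b2 : M} (h1 : DclP L a b1) (h2 : DclP L a b2) :
    DclP L a (eadd L b1 b2) := by
  refine dclP_fnDf h (n := 2)
    (Θ := fun v : Fin 2 ⊕ Fin 1 → M => v (Sum.inr 0) = eadd L (v (Sum.inl 0)) (v (Sum.inl 1)))
    ?_ a ![b1, b2] (fun i => by fin_cases i <;> simpa) (eadd L b1 b2) (fun y => ?_)
  · exact (Df.eq (Term.var (Sum.inr 0))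
      (tP L (Term.var (Sum.inl 0)) (Term.var (Sum.inl 1)))).congr (fun v => by simp)
  · simp

lemma dclP_mul {a b1 b2 : M} (h1 : DclP L a b1) (h2 : DclP L a b2) :
    DclP L a (emul L b1 b2) := by
  refine dclP_fnDf h (n := 2)
    (Θ := fun v : Fin 2 ⊕ Fin 1 → M => v (Sum.inr 0) = emul L (v (Sum.inl 0)) (v (Sum.inl 1)))
    ?_ a ![b1, b2] (fun i => by fin_cases i <;> simpa) (emul L b1 b2) (fun y => ?_)
  · exact (Df.eq (Term.var (Sum.inr 0))
      (tM L (Term.var (Sum.inl 0)) (Term.var (Sum.inl 1)))).congr (fun v => by simp)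
  · simp

end GenericCl

section Hull

variable {M : Type*} [arith.Structure M] (h : PAmod arith M)

/-- The definable-closure substructure. -/
def dclSub (a : M) : arith.Substructure M where
  carrier := {b | DclP arith a b}
  fun_mem := by
    intro n f
    intro x hx
    match n, f with
    | 0, ArithFunc.zero =>
      have : Structure.funMap (L := arith) ArithFunc.zero x = e0 arith := by
        rw [e0]
        exact congrArg _ (Subsingleton.elim _ _)
      rw [this]
      exact dclP_e0 h a
    | 0, ArithFunc.one =>
      have : Structure.funMap (L := arith) ArithFunc.one x = e1 arith := by
        rw [e1]
        exact congrArg _ (Subsingleton.elim _ _)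
      rw [this]
      exact dclP_e1 h a
    | 2, ArithFunc.add =>
      have : Structure.funMap (L := arith) ArithFunc.add x = eadd arith (x 0) (x 1) := by
        rw [eadd]
        exact congrArg _ (fin2_eq x)
      rw [this]
      exact dclP_add h (hx 0) (hx 1)
    | 2, ArithFunc.mul =>
      have : Structure.funMap (L := arith) ArithFunc.mul x = emul arith (x 0) (x 1) := by
        rw [emul]
        exact congrArg _ (fin2_eq x)
      rw [this]
      exact dclP_mul h (hx 0) (hx 1)

lemma dclSub_isElementary (a : M) : (dclSub h a).IsElementary := by
  apply Substructure.isElementary_of_exists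
  intro n φ x w hreal
  have hΘ := df_bf_snoc (L := arith) (M := M) φ
  have hex : (fun v : Fin n ⊕ Fin 1 → M =>
      φ.Realize (default : Empty → M)
        (Fin.snoc (fun i => v (Sum.inl i)) (v (Sum.inr 0))))
      (Sum.elim (fun i => (x i : M)) ![w]) := by
    show φ.Realize (default : Empty → M) _
    refine (iff_of_eq (congrArg (φ.Realize (default : Empty → M)) ?_)).mpr hreal
    funext j
    refine Fin.lastCases ?_ ?_ j
    · simp [Fin.snoc_last]
    · intro i
      simp [Fin.snoc_castSucc]
  obtain ⟨b, hbD, hbΘ, _⟩ := dcl_min h hΘ a (fun i => (x i : M)) (fun i => (x i).2) hex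
  refine ⟨⟨b, hbD⟩, ?_⟩
  have hbΘ' : φ.Realize (default : Empty → M)
      (Fin.snoc (fun i => Sum.elim (fun i => (x i : M)) ![b] (Sum.inl i))
        (Sum.elim (fun i => (x i : M)) ![b] (Sum.inr 0))) := hbΘ
  refine (iff_of_eq (congrArg (φ.Realize (default : Empty → M)) ?_)).mpr hbΘ'
  funext j
  refine Fin.lastCases ?_ ?_ j
  · simp [Fin.snoc_last]
  · intro i
    simp [Fin.snoc_castSucc]

/-- The definable closure as an elementary substructure. -/
def dclElem (a : M) : arith.ElementarySubstructure M :=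
  ⟨dclSub h a, dclSub_isElementary h a⟩

lemma mem_dclElem (a b : M) : b ∈ dclElem h a ↔ DclP arith a b := Iff.rfl

end Hull

section SubsetDir

variable {M : Type*} [arith.Structure M]

/-- Arithmetic definability implies definability in the expanded structure. -/
lemma dcl_subset_dclX (X : Set M) (a : M) : dcl arith a ⊆ dclX X a := by
  letI : xArith.Structure M := withX X
  haveI := withX_expansion X
  rintro b ⟨φ, hφ⟩
  refine ⟨LHom.sumInl.onFormula φ, fun y => ?_⟩
  rw [LHom.realize_onFormula]
  exact hφ y

end SubsetDir

end Dev9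

section Dev10

open FirstOrder Language

variable {M : Type*} [arith.Structure M]

lemma xterm_coe (X : Set M) (K : arith.ElementarySubstructure M) {α : Type}
    (t : xArith.Term α) (v : α → K) :
    ((@Term.realize xArith (↥K) (withX (Subtype.val ⁻¹' X)) α v t : ↥K) : M)
      = @Term.realize xArith M (withX X) α (fun i => (v i : M)) t := by
  induction t with
  | var i => rfl
  | func f ts ih =>
    cases f with
    | inl g =>
      exact congrArg (Structure.funMap (L := arith) (M := M) g) (funext fun i => ih i)
    | inr g => exact g.elim

lemma xterm_coe' (X : Set M) (K : arith.ElementarySubstructure M) {k : ℕ}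
    (t : xArith.Term (Empty ⊕ Fin k)) (xs : Fin k → K) :
    ((@Term.realize xArith (↥K) (withX (Subtype.val ⁻¹' X)) _
        (Sum.elim (default : Empty → ↥K) xs) t : ↥K) : M)
      = @Term.realize xArith M (withX X) _
          (Sum.elim (default : Empty → M) (fun i => (xs i : M))) t := by
  rw [xterm_coe X K t]
  refine congrArg (fun v => @Term.realize xArith M (withX X) _ v t) ?_
  funext j
  cases j with
  | inl e => exact e.elim
  | inr i => rfl

/-- Tarski–Vaught for pairs: if minimal witnesses over `K` exist in `K`,
then `(K, X ∩ K)` is an elementary substructure of `(M, X)`. -/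
lemma pairTV (X : Set M) (K : arith.ElementarySubstructure M)
    (hwit : ∀ (k : ℕ) (ψ : xArith.BoundedFormula Empty (k + 1)) (xs : Fin k → K) (w : M),
      @BoundedFormula.Realize xArith M (withX X) Empty (k + 1) ψ default
        (Fin.snoc (fun i => (xs i : M)) w) →
      ∃ b : K, @BoundedFormula.Realize xArith M (withX X) Empty (k + 1) ψ default
        (Fin.snoc (fun i => (xs i : M)) (b : M))) :
    ElemPairSub K X := by
  have hbf : ∀ (k : ℕ) (ψ : xArith.BoundedFormula Empty k) (xs : Fin k → K),
      @BoundedFormula.Realize xArith (↥K) (withX (Subtype.val ⁻¹' X)) Empty k ψ default xs ↔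
      @BoundedFormula.Realize xArith M (withX X) Empty k ψ default (fun i => (xs i : M)) := by
    intro k ψ
    induction ψ with
    | falsum => exact fun xs => Iff.rfl
    | equal t1 t2 =>
      intro xs
      have e1 := xterm_coe' X K t1 xs
      have e2 := xterm_coe' X K t2 xs
      constructor
      · intro hK
        have h2 : ((@Term.realize xArith (↥K) (withX (Subtype.val ⁻¹' X)) _
            (Sum.elim (default : Empty → ↥K) xs) t1 : ↥K) : M)
            = ((@Term.realize xArith (↥K) (withX (Subtype.val ⁻¹' X)) _
            (Sum.elim (default : Empty → ↥K) xs) t2 : ↥K) : M) := congrArg _ hK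
        rw [e1, e2] at h2
        exact h2
      · intro hM
        refine Subtype.coe_injective ?_
        beta_reduce
        rw [e1, e2]
        exact hM
    | rel R ts =>
      intro xs
      cases R with
      | inl r =>
        cases r
        exact iff_of_eq (congrArg (Structure.RelMap (L := arith) (M := M) ArithRel.lt)
          (funext fun i => xterm_coe' X K (ts i) xs))
      | inr r =>
        cases r
        exact iff_of_eq (congrArg (fun (z : M) => z ∈ X) (xterm_coe' X K (ts 0) xs))
    | imp f g ih1 ih2 =>
      intro xs
      exact imp_congr (ih1 xs) (ih2 xs)
    | all f ih =>
      intro xs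
      constructor
      · intro hK w
        by_contra hnw
        have hnot : @BoundedFormula.Realize xArith M (withX X) Empty _ f.not default
            (Fin.snoc (fun i => (xs i : M)) w) := hnw
        obtain ⟨b, hb⟩ := hwit _ f.not xs w hnot
        have hfb : ¬ @BoundedFormula.Realize xArith M (withX X) Empty _ f default
            (Fin.snoc (fun i => (xs i : M)) (b : M)) := hb
        have hKb := hK b
        have := (ih (Fin.snoc xs b)).mp hKb
        refine hfb ?_
        refine (iff_of_eq (congrArg (@BoundedFormula.Realize xArith M (withX X) Empty _
          f default) ?_)).mp this
        funext j
        refine Fin.lastCases ?_ ?_ j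
        · simp [Fin.snoc_last]
        · intro i
          simp [Fin.snoc_castSucc]
      · intro hM b
        have hMb := hM (b : M)
        refine (ih (Fin.snoc xs b)).mpr ?_
        refine (iff_of_eq (congrArg (@BoundedFormula.Realize xArith M (withX X) Empty _
          f default) ?_)).mp hMb
        funext j
        refine Fin.lastCases ?_ ?_ j
        · simp [Fin.snoc_last]
        · intro i
          simp [Fin.snoc_castSucc]
  intro n φ v
  have := hbf n (BoundedFormula.relabel Sum.inr φ) v
  rw [@Formula.realize_relabel_sumInr xArith (↥K) (withX (Subtype.val ⁻¹' X)) n φ default v,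
    @Formula.realize_relabel_sumInr xArith M (withX X) n φ default (fun i => (v i : M))] at this
  exact this

end Dev10

section Dev11

open FirstOrder Language

variable {M : Type*} [arith.Structure M]

lemma snoc_congr_aux {k : ℕ} (u : Fin k → M) (w : M) :
    (Fin.snoc (fun i => Sum.elim u ![w] (Sum.inl i)) (Sum.elim u ![w] (Sum.inr 0)) :
      Fin (k+1) → M) = Fin.snoc u w := by
  funext j
  refine Fin.lastCases ?_ ?_ j
  · simp [Fin.snoc_last]
  · intro i
    simp [Fin.snoc_castSucc]

theorem inductive_neutral_iff_elementary_pairs'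
    (hM : ModelOf arith M paT) (X : Set M) (hXind : IndSet X) :
    Neutral X ↔ ∀ K : arith.ElementarySubstructure M, ElemPairSub K X := by
  letI MX : xArith.Structure M := withX X
  have hMpa : PAmod arith M := hM
  have hXpa : PAmod xArith M := hXind
  constructor
  · -- Neutral → elementary pairs
    intro hN K
    apply pairTV X K
    intro k ψ xs w hw
    set u : Fin k → M := fun i => (xs i : M) with hu
    set c : M := cSeq (L := arith) u with hc
    have hcK : c ∈ K := cSeq_mem (K : arith.Substructure M) u (fun i => (xs i).2)
    have hΘ := df_bf_snoc (L := xArith) (M := M) ψ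
    have hparams : ∀ i, DclP xArith c (u i) := fun i => DclP.lift X (dclP_cSeq hMpa u i)
    have hex : (fun v : Fin k ⊕ Fin 1 → M =>
        @BoundedFormula.Realize xArith M MX Empty (k+1) ψ default
          (Fin.snoc (fun i => v (Sum.inl i)) (v (Sum.inr 0)))) (Sum.elim u ![w]) := by
      show @BoundedFormula.Realize xArith M MX Empty (k+1) ψ default _
      rw [snoc_congr_aux u w]
      exact hw
    obtain ⟨b, hbD, hbT, _⟩ := dcl_min hXpa hΘ c u hparams hex
    have hbX : b ∈ dclX X c := (dclP_iff_dcl (L := xArith) (M := M) (a := c) (b := b)).mp hbD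
    have hbA : b ∈ dcl arith c := by rw [hN c]; exact hbX
    have hbD' : DclP arith c b := (dclP_iff_dcl (L := arith)).mpr hbA
    have hbK : b ∈ K := mem_of_dclP K hcK hbD'
    refine ⟨⟨b, hbK⟩, ?_⟩
    have hbT' : @BoundedFormula.Realize xArith M MX Empty (k+1) ψ default
        (Fin.snoc (fun i => Sum.elim u ![b] (Sum.inl i)) (Sum.elim u ![b] (Sum.inr 0))) := hbT
    rw [snoc_congr_aux u b] at hbT'
    exact hbT'
  · -- elementary pairs → Neutral
    intro hP a
    apply Set.Subset.antisymm (dcl_subset_dclX X a)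
    intro b hb
    obtain ⟨φ, hφ⟩ := hb
    have hsub := hP (dclElem hMpa a)
    letI KX : xArith.Structure (↥(dclElem hMpa a)) := withX (Subtype.val ⁻¹' X)
    have haK : a ∈ dclElem hMpa a := dclP_self a
    set θ : xArith.BoundedFormula (Fin 1) 1 :=
      BoundedFormula.relabel (![Sum.inl 0, Sum.inr 0] : Fin 2 → Fin 1 ⊕ Fin 1) φ with hθdef
    -- M ⊨ ∃ y φ(a, y)
    have hexM : @Formula.Realize xArith M MX (Fin 1) θ.ex ![a] := by
      have : @BoundedFormula.Realize xArith M MX (Fin 1) 0 θ.ex ![a] default := by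
        rw [BoundedFormula.realize_ex]
        refine ⟨b, (relabel2_realize (L := xArith) (N := M) φ ![a] (Fin.snoc default b)).mpr ?_⟩
        have hbr := (hφ b).mpr rfl
        refine (bf0_congr φ default default ?_).mp hbr
        funext j
        fin_cases j <;> simp [Fin.snoc]
      exact this
    -- transfer to K
    have hexK : @Formula.Realize xArith (↥(dclElem hMpa a))
        (withX (Subtype.val ⁻¹' X)) (Fin 1) θ.ex ![⟨a, haK⟩] := by
      refine (hsub 1 θ.ex ![⟨a, haK⟩]).mpr ?_
      refine (bf0_congr θ.ex default default ?_).mp hexM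
      funext j
      fin_cases j
      rfl
    have hexK' : @BoundedFormula.Realize xArith (↥(dclElem hMpa a))
        (withX (Subtype.val ⁻¹' X)) (Fin 1) 0 θ.ex ![⟨a, haK⟩] default := hexK
    rw [BoundedFormula.realize_ex] at hexK'
    obtain ⟨d, hd⟩ := hexK'
    -- back to φ over K
    have hdK : @Formula.Realize xArith (↥(dclElem hMpa a))
        (withX (Subtype.val ⁻¹' X)) (Fin 2) φ ![⟨a, haK⟩, d] := by
      have hKd := (relabel2_realize (L := xArith) (N := ↥(dclElem hMpa a)) φ
        ![⟨a, haK⟩] (Fin.snoc default d)).mp hd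
      refine (bf0_congr φ default default ?_).mp hKd
      funext j
      fin_cases j <;> simp [Fin.snoc]
    -- transfer to M
    have hdM : @Formula.Realize xArith M MX (Fin 2) φ ![a, (d : M)] := by
      have := (hsub 2 φ ![⟨a, haK⟩, d]).mp hdK
      refine (bf0_congr φ default default ?_).mp this
      funext j
      fin_cases j <;> rfl
    have hdb : (d : M) = b := (hφ _).mp hdM
    have : DclP arith a (d : M) := d.2
    rw [hdb] at this
    exact (dclP_iff_dcl (L := arith)).mp this

end Dev11

/-- An inductive subset `X` of a model `M` of PA is neutral iff for
every elementary submodel `K ≼ M`, `(K, X ∩ K) ≼ (M, X)`. -/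
theorem inductive_neutral_iff_elementary_pairs
    {M : Type*} [arith.Structure M] (hM : ModelOf arith M paT)
    (X : Set M) (hXind : IndSet X) :
    Neutral X ↔ ∀ K : arith.ElementarySubstructure M, ElemPairSub K X := by
  exact inductive_neutral_iff_elementary_pairs' hM X hXind

end NeutralPA
end

section
/- Let M be a model of PA, let X be a neutral subset of M, and let N be a superminimal elementary extension of M. If Y ⊆ N is such that (M, X) ≺ (N, Y), then Y is a neutral subset of N. -/
open FirstOrder Language

namespace NeutralPA

section Aux

open FirstOrder Language

variable {L : Language}

/-- The formula `∃ y, φ(x, y)` in one free variable. -/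
noncomputable def exSnd (φ : L.Formula (Fin 2)) : L.Formula (Fin 1) :=
  (φ.relabel (![Sum.inl 0, Sum.inr 0] : Fin 2 → Fin 1 ⊕ Fin 1)).iExs (Fin 1)

lemma realize_exSnd {M' : Type*} [L.Structure M'] (φ : L.Formula (Fin 2)) (a : M') :
    (exSnd φ).Realize ![a] ↔ ∃ y, φ.Realize ![a, y] := by
  rw [exSnd, Formula.realize_iExs]
  simp only [Formula.realize_relabel, Function.comp_def]
  constructor
  · rintro ⟨i, hi⟩
    refine ⟨i 0, ?_⟩
    convert hi using 1
    funext j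
    fin_cases j <;> rfl
  · rintro ⟨y, hy⟩
    refine ⟨fun _ => y, ?_⟩
    convert hy using 1
    funext j
    fin_cases j <;> rfl

/-- The formula `∀ y, (φ(x₀, y) ↔ y = x₁)` in two free variables. -/
noncomputable def uniqFml (φ : L.Formula (Fin 2)) : L.Formula (Fin 2) :=
  ((((φ.relabel (![0, 2] : Fin 2 → Fin 3))).iff
      (Term.equal (Term.var (2 : Fin 3)) (Term.var (1 : Fin 3)))).relabel
    (![Sum.inl 0, Sum.inl 1, Sum.inr 0] : Fin 3 → Fin 2 ⊕ Fin 1)).iAlls (Fin 1)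

lemma realize_uniqFml {M' : Type*} [L.Structure M'] (φ : L.Formula (Fin 2)) (a c : M') :
    (uniqFml φ).Realize ![a, c] ↔ ∀ y, φ.Realize ![a, y] ↔ y = c := by
  rw [uniqFml, Formula.realize_iAlls]
  simp only [Formula.realize_relabel, Function.comp_def]
  have key : ∀ i : Fin 1 → M',
      (fun j => Sum.elim (![a, c] : Fin 2 → M') i
        ((![Sum.inl 0, Sum.inl 1, Sum.inr 0] : Fin 3 → Fin 2 ⊕ Fin 1) j)) = ![a, c, i 0] := by
    intro i
    funext j
    fin_cases j <;> rfl
  have key2 : ∀ y : M', ((![a, c, y] : Fin 3 → M') ∘ (![0, 2] : Fin 2 → Fin 3)) = ![a, y] := by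
    intro y
    funext j
    fin_cases j <;> rfl
  constructor
  · intro h y
    have := h (fun _ => y)
    rw [key (fun _ => y), Formula.realize_iff, Formula.realize_relabel, key2 y,
      Formula.realize_equal] at this
    simpa using this
  · intro h i
    rw [key i, Formula.realize_iff, Formula.realize_relabel, key2 (i 0),
      Formula.realize_equal]
    simpa using h (i 0)

end Aux

lemma withX_expansion_s3 {M : Type*} [arith.Structure M] (X : Set M) :
    @Language.LHom.IsExpansionOn arith xArith Language.LHom.sumInl M _ (withX X) :=
  letI := withX X
  { map_onFunction := fun _ _ => rfl
    map_onRelation := fun _ _ => rfl }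

/-- If `X` is a neutral subset of a model `M` of PA, `N` is a
superminimal elementary extension of `M`, and `Y ⊆ N` is such that
`(M, X) ≼ (N, Y)`, then `Y` is a neutral subset of `N`. -/
theorem neutral_of_superminimal_pair_extension
    {M N : Type*} [arith.Structure M] [arith.Structure N]
    (hM : ModelOf arith M paT) (X : Set M) (hXneu : Neutral X)
    (f : M ↪ₑ[arith] N) (hsm : Superminimal f)
    (Y : Set N) (hXY : ElemPairEmb f.toFun X Y) :
    Neutral Y := by
  classical
  letI sM : xArith.Structure M := withX X
  letI sN : xArith.Structure N := withX Y
  haveI : (Language.LHom.sumInl : arith →ᴸ xArith).IsExpansionOn N := withX_expansion_s3 Y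
  intro a
  apply Set.Subset.antisymm
  · rintro b ⟨ψ, hψ⟩
    refine ⟨(Language.LHom.sumInl : arith →ᴸ xArith).onFormula ψ, fun y => ?_⟩
    rw [Language.LHom.realize_onFormula]
    exact hψ y
  · rintro b hb
    by_cases ha : a ∈ Set.range (f : M → N)
    · obtain ⟨a₀, rfl⟩ := ha
      obtain ⟨φ, hφ⟩ := hb
      -- pull back the existence of a solution to M
      have hexN : (exSnd φ).Realize ![f a₀] :=
        (realize_exSnd φ (f a₀)).2 ⟨b, (hφ b).2 rfl⟩
      have hcomp1 : (f.toFun ∘ ![a₀]) = ![f a₀] := by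
        funext j; fin_cases j <;> rfl
      have hexM : (exSnd φ).Realize (M := M) ![a₀] := by
        have := hXY 1 (exSnd φ) ![a₀]
        rw [hcomp1] at this
        exact this.2 hexN
      obtain ⟨b₀, hb₀⟩ := (realize_exSnd φ a₀).1 hexM
      have push : ∀ y : M, Formula.Realize (M := M) φ ![a₀, y] →
          Formula.Realize (M := N) φ ![f a₀, f y] := by
        intro y hy
        have hcomp : (f.toFun ∘ ![a₀, y]) = ![f a₀, f y] := by
          funext j; fin_cases j <;> rfl
        have := (hXY 2 φ ![a₀, y]).1 hy
        rwa [hcomp] at this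
      have hfb₀ : f b₀ = b := (hφ (f b₀)).1 (push b₀ hb₀)
      have huniq : ∀ y : M, Formula.Realize (M := M) φ ![a₀, y] ↔ y = b₀ := by
        intro y
        constructor
        · intro hy
          exact f.injective (((hφ (f y)).1 (push y hy)).trans hfb₀.symm)
        · rintro rfl; exact hb₀
      have hbX : b₀ ∈ dclX X a₀ := ⟨φ, huniq⟩
      rw [← hXneu a₀] at hbX
      obtain ⟨ψ, hψ⟩ := hbX
      have hu : (uniqFml ψ).Realize ![a₀, b₀] := (realize_uniqFml ψ a₀ b₀).2 hψ
      have huN := (f.map_formula (uniqFml ψ) ![a₀, b₀]).2 hu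
      have hcomp2 : ((f : M → N) ∘ ![a₀, b₀]) = ![f a₀, f b₀] := by
        funext j; fin_cases j <;> rfl
      rw [hcomp2] at huN
      have hfin := (realize_uniqFml ψ (f a₀) (f b₀)).1 huN
      rw [hfb₀] at hfin
      exact ⟨ψ, hfin⟩
    · exact hsm a ha b

end NeutralPA
end
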